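/- arXiv:2405.12011 — 5 statements merged into one kernel-verified Lean document; each statement's English description precedes it below -/
import Mathlib

section
/- Let q be a prime power and let T ⊂ PG(3,q) be the union of the two intersecting lines {x₂=x₃=0} and {x₁=x₃=0}. Then I₂(T) has dimension 5 with basis {X₁X₂, X₀X₃, X₁X₃, X₂X₃, X₃²}, and V(I₂(T)) = T; that is, the union of two intersecting lines is a maximal rank-5 configuration. -/
open MvPolynomial

noncomputable section

/-- `PG3 F` is the projective space `PG(3, F)`. -/
abbrev PG3 (F : Type*) [Field F] := Projectivization F (Fin 4 → F)

/-- `I2 F S` is the space of quadratic forms in `X₀,…,X₃` vanishing on `S ⊆ PG(3,F)`. -/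
def I2 (F : Type*) [Field F] (S : Set (PG3 F)) : Submodule F (MvPolynomial (Fin 4) F) :=
  homogeneousSubmodule (Fin 4) F 2 ⊓
    ⨅ p ∈ S, LinearMap.ker ((aeval p.rep : MvPolynomial (Fin 4) F →ₐ[F] F).toLinearMap)

/-- the rank of a configuration `S ⊆ PG(3,F)`: `10 − dim I₂(S)`. -/
def rk (F : Type*) [Field F] (S : Set (PG3 F)) : ℕ :=
  10 - Module.finrank F (I2 F S)

/-- `Vz F I` is the common zero locus in `PG(3,F)` of the set `I` of polynomials. -/
def Vz (F : Type*) [Field F] (I : Set (MvPolynomial (Fin 4) F)) : Set (PG3 F) :=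
  {p | ∀ f ∈ I, eval p.rep f = 0}

namespace Stmt5Aux

/-- the exponent vector of `X i * X j`. -/
def D (i j : Fin 4) : Fin 4 →₀ ℕ := Finsupp.single i 1 + Finsupp.single j 1

lemma finsupp_eq_iff (d e : Fin 4 →₀ ℕ) :
    d = e ↔ (d 0 = e 0 ∧ d 1 = e 1 ∧ d 2 = e 2 ∧ d 3 = e 3) := by
  constructor
  · rintro rfl; exact ⟨rfl, rfl, rfl, rfl⟩
  · rintro ⟨h0, h1, h2, h3⟩
    ext x; fin_cases x <;> assumption

lemma eq_D00_iff (d : Fin 4 →₀ ℕ) :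
    d = D 0 0 ↔ d 0 = 2 ∧ d 1 = 0 ∧ d 2 = 0 ∧ d 3 = 0 := by
  rw [finsupp_eq_iff]
  simp [D]

lemma eq_D01_iff (d : Fin 4 →₀ ℕ) :
    d = D 0 1 ↔ d 0 = 1 ∧ d 1 = 1 ∧ d 2 = 0 ∧ d 3 = 0 := by
  rw [finsupp_eq_iff]
  simp [D]

lemma eq_D02_iff (d : Fin 4 →₀ ℕ) :
    d = D 0 2 ↔ d 0 = 1 ∧ d 1 = 0 ∧ d 2 = 1 ∧ d 3 = 0 := by
  rw [finsupp_eq_iff]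
  simp [D]

lemma eq_D03_iff (d : Fin 4 →₀ ℕ) :
    d = D 0 3 ↔ d 0 = 1 ∧ d 1 = 0 ∧ d 2 = 0 ∧ d 3 = 1 := by
  rw [finsupp_eq_iff]
  simp [D]

lemma eq_D11_iff (d : Fin 4 →₀ ℕ) :
    d = D 1 1 ↔ d 0 = 0 ∧ d 1 = 2 ∧ d 2 = 0 ∧ d 3 = 0 := by
  rw [finsupp_eq_iff]
  simp [D]

lemma eq_D12_iff (d : Fin 4 →₀ ℕ) :
    d = D 1 2 ↔ d 0 = 0 ∧ d 1 = 1 ∧ d 2 = 1 ∧ d 3 = 0 := by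
  rw [finsupp_eq_iff]
  simp [D]

lemma eq_D13_iff (d : Fin 4 →₀ ℕ) :
    d = D 1 3 ↔ d 0 = 0 ∧ d 1 = 1 ∧ d 2 = 0 ∧ d 3 = 1 := by
  rw [finsupp_eq_iff]
  simp [D]

lemma eq_D22_iff (d : Fin 4 →₀ ℕ) :
    d = D 2 2 ↔ d 0 = 0 ∧ d 1 = 0 ∧ d 2 = 2 ∧ d 3 = 0 := by
  rw [finsupp_eq_iff]
  simp [D]

lemma eq_D23_iff (d : Fin 4 →₀ ℕ) :
    d = D 2 3 ↔ d 0 = 0 ∧ d 1 = 0 ∧ d 2 = 1 ∧ d 3 = 1 := by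
  rw [finsupp_eq_iff]
  simp [D]

lemma eq_D33_iff (d : Fin 4 →₀ ℕ) :
    d = D 3 3 ↔ d 0 = 0 ∧ d 1 = 0 ∧ d 2 = 0 ∧ d 3 = 2 := by
  rw [finsupp_eq_iff]
  simp [D]

lemma deg2_cases (d : Fin 4 →₀ ℕ) (h : d 0 + d 1 + d 2 + d 3 = 2) :
    d = D 0 0 ∨ d = D 0 1 ∨ d = D 0 2 ∨ d = D 0 3 ∨ d = D 1 1 ∨
      d = D 1 2 ∨ d = D 1 3 ∨ d = D 2 2 ∨ d = D 2 3 ∨ d = D 3 3 := by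
  obtain ⟨a, ha⟩ : ∃ a, d 0 = a := ⟨_, rfl⟩
  obtain ⟨b, hb⟩ : ∃ b, d 1 = b := ⟨_, rfl⟩
  obtain ⟨c, hc⟩ : ∃ c, d 2 = c := ⟨_, rfl⟩
  obtain ⟨e, he⟩ : ∃ e, d 3 = e := ⟨_, rfl⟩
  have hcases : (a = 2 ∧ b = 0 ∧ c = 0 ∧ e = 0) ∨
      (a = 1 ∧ b = 1 ∧ c = 0 ∧ e = 0) ∨
      (a = 1 ∧ b = 0 ∧ c = 1 ∧ e = 0) ∨
      (a = 1 ∧ b = 0 ∧ c = 0 ∧ e = 1) ∨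
      (a = 0 ∧ b = 2 ∧ c = 0 ∧ e = 0) ∨
      (a = 0 ∧ b = 1 ∧ c = 1 ∧ e = 0) ∨
      (a = 0 ∧ b = 1 ∧ c = 0 ∧ e = 1) ∨
      (a = 0 ∧ b = 0 ∧ c = 2 ∧ e = 0) ∨
      (a = 0 ∧ b = 0 ∧ c = 1 ∧ e = 1) ∨
      (a = 0 ∧ b = 0 ∧ c = 0 ∧ e = 2) := by
    have h2 : a + b + c + e = 2 := by omega
    have ha2 : a ≤ 2 := by omega
    have hb2 : b ≤ 2 := by omega
    have hc2 : c ≤ 2 := by omega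
    have he2 : e ≤ 2 := by omega
    clear h ha hb hc he
    interval_cases a <;> interval_cases b <;> interval_cases c <;> interval_cases e <;>
      simp_all
  subst ha hb hc he
  rcases hcases with hc | hc | hc | hc | hc | hc | hc | hc | hc | hc
  · exact Or.inl ((eq_D00_iff d).mpr hc)
  · exact Or.inr <| Or.inl ((eq_D01_iff d).mpr hc)
  · exact Or.inr <| Or.inr <| Or.inl ((eq_D02_iff d).mpr hc)
  · exact Or.inr <| Or.inr <| Or.inr <| Or.inl ((eq_D03_iff d).mpr hc)
  · exact Or.inr <| Or.inr <| Or.inr <| Or.inr <| Or.inl ((eq_D11_iff d).mpr hc)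
  · exact Or.inr <| Or.inr <| Or.inr <| Or.inr <| Or.inr <| Or.inl ((eq_D12_iff d).mpr hc)
  · exact Or.inr <| Or.inr <| Or.inr <| Or.inr <| Or.inr <| Or.inr <| Or.inl ((eq_D13_iff d).mpr hc)
  · exact Or.inr <| Or.inr <| Or.inr <| Or.inr <| Or.inr <| Or.inr <| Or.inr <| Or.inl ((eq_D22_iff d).mpr hc)
  · exact Or.inr <| Or.inr <| Or.inr <| Or.inr <| Or.inr <| Or.inr <| Or.inr <| Or.inr <| Or.inl ((eq_D23_iff d).mpr hc)
  · exact Or.inr <| Or.inr <| Or.inr <| Or.inr <| Or.inr <| Or.inr <| Or.inr <| Or.inr <| Or.inr ((eq_D33_iff d).mpr hc)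

lemma X_mul_X {F : Type*} [Field F] (a b : Fin 4) :
    (X a * X b : MvPolynomial (Fin 4) F) = monomial (D a b) 1 := by
  rw [← pow_one (X a), ← pow_one (X b), X_pow_eq_monomial, X_pow_eq_monomial,
    monomial_mul, one_mul]
  rfl

lemma prod_D {F : Type*} [Field F] (v : Fin 4 → F) (a b : Fin 4) :
    (∏ i, v i ^ (D a b) i) = v a * v b := by
  simp only [D, Finsupp.add_apply, Finsupp.single_apply, pow_add, Finset.prod_mul_distrib,
    pow_ite, pow_one, pow_zero]
  rw [Finset.prod_ite_eq, Finset.prod_ite_eq]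
  simp

lemma eval_smul_of_homog {F : Type*} [Field F] {f : MvPolynomial (Fin 4) F} {n : ℕ}
    (hf : f.IsHomogeneous n) (c : F) (v : Fin 4 → F) :
    eval (c • v) f = c ^ n * eval v f := by
  rw [eval_eq', eval_eq', Finset.mul_sum]
  refine Finset.sum_congr rfl fun d hd => ?_
  have hdeg : ∑ i, d i = n := by
    have h1 := hf (MvPolynomial.mem_support_iff.mp hd)
    rw [← h1, Pi.one_def, ← Finsupp.degree_eq_weight_one, Finsupp.degree]
    exact (Finset.sum_subset (Finset.subset_univ _)
      (fun i _ hi => Finsupp.notMem_support_iff.mp hi)).symm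
  rw [← hdeg]
  simp only [Pi.smul_apply, smul_eq_mul, mul_pow]
  rw [Finset.prod_mul_distrib, Finset.prod_pow_eq_pow_sum]
  ring

lemma sum4 {F : Type*} [Field F] {f : MvPolynomial (Fin 4) F}
    (hf : f.IsHomogeneous 2) {d : Fin 4 →₀ ℕ} (hd : d ∈ f.support) :
    d 0 + d 1 + d 2 + d 3 = 2 := by
  have h1 := hf (MvPolynomial.mem_support_iff.mp hd)
  have h2 : ∑ i, d i = 2 := by
    rw [← h1, Pi.one_def, ← Finsupp.degree_eq_weight_one, Finsupp.degree]
    exact (Finset.sum_subset (Finset.subset_univ _)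
      (fun i _ hi => Finsupp.notMem_support_iff.mp hi)).symm
  simpa [Fin.sum_univ_four] using h2

def vals (d : Fin 4 →₀ ℕ) : ℕ := d 0 * 1000 + d 1 * 100 + d 2 * 10 + d 3

def ι : Fin 5 → (Fin 4 →₀ ℕ) := ![D 1 2, D 0 3, D 1 3, D 2 3, D 3 3]

lemma vals_ι : vals ∘ ι = ![110, 1001, 101, 11, 2] := by
  funext i
  fin_cases i <;> simp [vals, ι, D]

lemma ι_inj : Function.Injective ι := by
  have h : Function.Injective (vals ∘ ι) := by
    rw [vals_ι]
    intro x y hxy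
    fin_cases x <;> fin_cases y <;> simp_all
  exact fun x y hxy => h (by simp [Function.comp, hxy])

lemma fr (F : Type*) [Field F] :
    Module.finrank F (Submodule.span F
      ({X 1 * X 2, X 0 * X 3, X 1 * X 3, X 2 * X 3, X 3 * X 3} :
        Set (MvPolynomial (Fin 4) F))) = 5 := by
  have hb : (![X 1 * X 2, X 0 * X 3, X 1 * X 3, X 2 * X 3, X 3 * X 3] :
      Fin 5 → MvPolynomial (Fin 4) F)
      = fun i => monomial (ι i) (1 : F) := by
    funext i
    fin_cases i <;> simp [ι, X_mul_X]
  have hli : LinearIndependent F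
      (![X 1 * X 2, X 0 * X 3, X 1 * X 3, X 2 * X 3, X 3 * X 3] :
        Fin 5 → MvPolynomial (Fin 4) F) := by
    rw [hb]
    exact (basisMonomials (Fin 4) F).linearIndependent.comp _ ι_inj
  have hrange : Set.range (![X 1 * X 2, X 0 * X 3, X 1 * X 3, X 2 * X 3, X 3 * X 3] :
      Fin 5 → MvPolynomial (Fin 4) F)
      = {X 1 * X 2, X 0 * X 3, X 1 * X 3, X 2 * X 3, X 3 * X 3} := by
    ext g
    simp only [Matrix.range_cons, Matrix.range_empty, Set.union_empty, Set.union_singleton,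
      Set.singleton_union, Set.mem_union, Set.mem_insert_iff, Set.mem_singleton_iff]
    tauto
  rw [← hrange, finrank_span_eq_card hli, Fintype.card_fin]

end Stmt5Aux

open Stmt5Aux

theorem stmt5 (F : Type*) [Field F] [Fintype F]
    (T : Set (PG3 F))
    (hT : T = {p : PG3 F | p.rep 2 = 0 ∧ p.rep 3 = 0} ∪
              {p : PG3 F | p.rep 1 = 0 ∧ p.rep 3 = 0}) :
    I2 F T = Submodule.span F {X 1 * X 2, X 0 * X 3, X 1 * X 3, X 2 * X 3, X 3 * X 3} ∧
    Module.finrank F (I2 F T) = 5 ∧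
    Vz F (I2 F T) = T ∧
    rk F T = 5 := by
  classical
  have hspan : I2 F T = Submodule.span F
      {X 1 * X 2, X 0 * X 3, X 1 * X 3, X 2 * X 3, X 3 * X 3} := by
    apply le_antisymm
    · -- I2 ⊆ span
      intro f hf
      rw [I2, Submodule.mem_inf] at hf
      obtain ⟨hhom', hvan'⟩ := hf
      have hhom : f.IsHomogeneous 2 := hhom'
      have hvan : ∀ p ∈ T, eval p.rep f = 0 := by
        intro p hp
        have := (Submodule.mem_iInf _).mp ((Submodule.mem_iInf _).mp hvan' p) hp
        simpa using this
      have hv0 : ∀ (v : Fin 4 → F) (hv : v ≠ 0),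
          ((v 2 = 0 ∧ v 3 = 0) ∨ (v 1 = 0 ∧ v 3 = 0)) → eval v f = 0 := by
        intro v hv hcase
        obtain ⟨a, hav⟩ := Projectivization.exists_smul_eq_mk_rep F v hv
        have hp : Projectivization.mk F v hv ∈ T := by
          rw [hT]
          rcases hcase with ⟨h2, h3⟩ | ⟨h1, h3⟩
          · left
            constructor <;> rw [← hav] <;>
              simp [Units.smul_def, Pi.smul_apply, h2, h3]
          · right
            constructor <;> rw [← hav] <;>
              simp [Units.smul_def, Pi.smul_apply, h1, h3]
        have h0 := hvan _ hp
        rw [← hav, Units.smul_def, eval_smul_of_homog hhom] at h0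
        have ha : ((a : F) ^ 2) ≠ 0 := pow_ne_zero _ a.ne_zero
        exact (mul_eq_zero.mp h0).resolve_left ha
      have key : ∀ v : Fin 4 → F,
          eval v f = ∑ d ∈ f.support, coeff d f * ∏ i, v i ^ d i :=
        fun v => eval_eq' v f
      have hvA : eval (![1,0,0,0] : Fin 4 → F) f = 0 :=
        hv0 _ (by intro h; simpa using congrFun h 0) (Or.inl ⟨rfl, rfl⟩)
      have hvB : eval (![0,1,0,0] : Fin 4 → F) f = 0 :=
        hv0 _ (by intro h; simpa using congrFun h 1) (Or.inl ⟨rfl, rfl⟩)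
      have hvC : eval (![1,1,0,0] : Fin 4 → F) f = 0 :=
        hv0 _ (by intro h; simpa using congrFun h 0) (Or.inl ⟨rfl, rfl⟩)
      have hvD : eval (![0,0,1,0] : Fin 4 → F) f = 0 :=
        hv0 _ (by intro h; simpa using congrFun h 2) (Or.inr ⟨rfl, rfl⟩)
      have hvE : eval (![1,0,1,0] : Fin 4 → F) f = 0 :=
        hv0 _ (by intro h; simpa using congrFun h 0) (Or.inr ⟨rfl, rfl⟩)
      have E00 : coeff (D 0 0) f = 0 := by
        rw [key] at hvA
        rw [Finset.sum_eq_single (D 0 0) ?_ ?_] at hvA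
        · simpa [prod_D] using hvA
        · intro d hd hne
          rcases deg2_cases d (sum4 hhom hd) with
            rfl | rfl | rfl | rfl | rfl | rfl | rfl | rfl | rfl | rfl
          · exact absurd rfl hne
          all_goals simp [prod_D]
        · intro hd; simp [MvPolynomial.notMem_support_iff.mp hd]
      have E11 : coeff (D 1 1) f = 0 := by
        rw [key] at hvB
        rw [Finset.sum_eq_single (D 1 1) ?_ ?_] at hvB
        · simpa [prod_D] using hvB
        · intro d hd hne
          rcases deg2_cases d (sum4 hhom hd) with
            rfl | rfl | rfl | rfl | rfl | rfl | rfl | rfl | rfl | rfl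
          · simp [prod_D]
          · simp [prod_D]
          · simp [prod_D]
          · simp [prod_D]
          · exact absurd rfl hne
          all_goals simp [prod_D]
        · intro hd; simp [MvPolynomial.notMem_support_iff.mp hd]
      have E22 : coeff (D 2 2) f = 0 := by
        rw [key] at hvD
        rw [Finset.sum_eq_single (D 2 2) ?_ ?_] at hvD
        · simpa [prod_D] using hvD
        · intro d hd hne
          rcases deg2_cases d (sum4 hhom hd) with
            rfl | rfl | rfl | rfl | rfl | rfl | rfl | rfl | rfl | rfl
          · simp [prod_D]
          · simp [prod_D]
          · simp [prod_D]
          · simp [prod_D]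
          · simp [prod_D]
          · simp [prod_D]
          · simp [prod_D]
          · exact absurd rfl hne
          all_goals simp [prod_D]
        · intro hd; simp [MvPolynomial.notMem_support_iff.mp hd]
      have E01 : coeff (D 0 1) f = 0 := by
        rw [key] at hvC
        rw [Finset.sum_eq_single (D 0 1) ?_ ?_] at hvC
        · simpa [prod_D] using hvC
        · intro d hd hne
          rcases deg2_cases d (sum4 hhom hd) with
            rfl | rfl | rfl | rfl | rfl | rfl | rfl | rfl | rfl | rfl
          · simp [prod_D, E00]
          · exact absurd rfl hne
          · simp [prod_D]
          · simp [prod_D]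
          · simp [prod_D, E11]
          all_goals simp [prod_D]
        · intro hd; simp [MvPolynomial.notMem_support_iff.mp hd]
      have E02 : coeff (D 0 2) f = 0 := by
        rw [key] at hvE
        rw [Finset.sum_eq_single (D 0 2) ?_ ?_] at hvE
        · simpa [prod_D] using hvE
        · intro d hd hne
          rcases deg2_cases d (sum4 hhom hd) with
            rfl | rfl | rfl | rfl | rfl | rfl | rfl | rfl | rfl | rfl
          · simp [prod_D, E00]
          · simp [prod_D]
          · exact absurd rfl hne
          · simp [prod_D]
          · simp [prod_D]
          · simp [prod_D]
          · simp [prod_D]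
          · simp [prod_D, E22]
          all_goals simp [prod_D]
        · intro hd; simp [MvPolynomial.notMem_support_iff.mp hd]
      rw [MvPolynomial.as_sum f]
      apply Submodule.sum_mem
      intro d hd
      have hmem : ∀ (a b : Fin 4),
          (X a * X b : MvPolynomial (Fin 4) F) ∈
            ({X 1 * X 2, X 0 * X 3, X 1 * X 3, X 2 * X 3, X 3 * X 3} :
              Set (MvPolynomial (Fin 4) F)) →
          (monomial (D a b)) (coeff (D a b) f) ∈ Submodule.span F
            ({X 1 * X 2, X 0 * X 3, X 1 * X 3, X 2 * X 3, X 3 * X 3} :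
              Set (MvPolynomial (Fin 4) F)) := by
        intro a b hab
        have hx : (monomial (D a b)) (coeff (D a b) f)
            = coeff (D a b) f • (X a * X b : MvPolynomial (Fin 4) F) := by
          rw [X_mul_X, smul_monomial, smul_eq_mul, mul_one]
        rw [hx]
        exact Submodule.smul_mem _ _ (Submodule.subset_span hab)
      rcases deg2_cases d (sum4 hhom hd) with
        rfl | rfl | rfl | rfl | rfl | rfl | rfl | rfl | rfl | rfl
      · rw [E00]; simp
      · rw [E01]; simp
      · rw [E02]; simp
      · exact hmem 0 3 (by simp)
      · rw [E11]; simp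
      · exact hmem 1 2 (by simp)
      · exact hmem 1 3 (by simp)
      · rw [E22]; simp
      · exact hmem 2 3 (by simp)
      · exact hmem 3 3 (by simp)
    · -- span ⊆ I2
      rw [Submodule.span_le]
      have base : ∀ a b : Fin 4, (∀ p ∈ T, p.rep a * p.rep b = 0) →
          (X a * X b : MvPolynomial (Fin 4) F) ∈ I2 F T := by
        intro a b hab
        rw [I2, Submodule.mem_inf]
        constructor
        · exact (isHomogeneous_X F a).mul (isHomogeneous_X F b)
        · refine (Submodule.mem_iInf _).mpr fun p => (Submodule.mem_iInf _).mpr fun hp => ?_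
          simp only [LinearMap.mem_ker, AlgHom.toLinearMap_apply, map_mul, aeval_X]
          exact hab p hp
      rintro g hg
      simp only [Set.mem_insert_iff, Set.mem_singleton_iff] at hg
      rcases hg with rfl | rfl | rfl | rfl | rfl <;>
        refine base _ _ fun p hp => ?_ <;>
        rw [hT] at hp <;>
        rcases hp with ⟨ha, hb⟩ | ⟨ha, hb⟩ <;>
        simp [ha, hb]
  have hfr : Module.finrank F (I2 F T) = 5 := by
    rw [hspan]
    exact fr F
  have hVz : Vz F (I2 F T) = T := by
    apply Set.Subset.antisymm
    · intro p hp
      have h33 : eval p.rep (X 3 * X 3 : MvPolynomial (Fin 4) F) = 0 :=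
        hp _ (by rw [hspan]; exact Submodule.subset_span (by simp))
      have h12 : eval p.rep (X 1 * X 2 : MvPolynomial (Fin 4) F) = 0 :=
        hp _ (by rw [hspan]; exact Submodule.subset_span (by simp))
      simp only [map_mul, eval_X] at h33 h12
      have h3 : p.rep 3 = 0 := by
        rcases mul_eq_zero.mp h33 with h | h <;> exact h
      rw [hT]
      rcases mul_eq_zero.mp h12 with h | h
      · exact Or.inr ⟨h, h3⟩
      · exact Or.inl ⟨h, h3⟩
    · intro p hp f hf
      have hf' : f ∈ I2 F T := hf
      rw [I2, Submodule.mem_inf] at hf'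
      have := (Submodule.mem_iInf _).mp ((Submodule.mem_iInf _).mp hf'.2 p) hp
      simpa using this
  exact ⟨hspan, hfr, hVz, by rw [rk, hfr]⟩
end
end

section
/- Let q be a prime power and let T ⊂ PG(3,q) be the union of the two skew lines L₁ = {x₂=x₃=0} and L₂ = {x₀=x₁=0}. Then I₂(T) has dimension 4 with basis {X₀X₂, X₀X₃, X₁X₂, X₁X₃}, and V(I₂(T)) = T; that is, a pair of skew lines is a maximal rank-6 configuration. -/
open MvPolynomial

noncomputable section

/-! ### Auxiliary lemmas -/

/-- The exponent finsupp of the monomial `X i * X j`. -/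
def mm (i j : Fin 4) : Fin 4 →₀ ℕ := Finsupp.single i 1 + Finsupp.single j 1

lemma fext_iff (d e : Fin 4 →₀ ℕ) : d = e ↔ d 0 = e 0 ∧ d 1 = e 1 ∧ d 2 = e 2 ∧ d 3 = e 3 := by
  constructor
  · rintro rfl; exact ⟨rfl, rfl, rfl, rfl⟩
  · rintro ⟨h0, h1, h2, h3⟩
    ext i; fin_cases i <;> assumption

lemma mm_apply (i j k : Fin 4) :
    mm i j k = (if i = k then 1 else 0) + (if j = k then 1 else 0) := by
  simp [mm, Finsupp.single_apply]

lemma deg_two {F : Type*} [Field F] {f : MvPolynomial (Fin 4) F} (hf : f.IsHomogeneous 2)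
    {d : Fin 4 →₀ ℕ} (hc : coeff d f ≠ 0) : d 0 + d 1 + d 2 + d 3 = 2 := by
  have h := hf hc
  change (Finsupp.weight (fun _ => 1)) d = 2 at h
  rw [← Finsupp.degree_eq_weight_one] at h
  have hd : d.degree = ∑ i : Fin 4, d i := by
    rw [Finsupp.degree_apply]
    exact Finset.sum_subset (Finset.subset_univ _) (fun i _ hi => Finsupp.notMem_support_iff.1 hi)
  rw [hd, Fin.sum_univ_four] at h
  exact h

lemma fe10 : ((1:Fin 4) = 0) = False := by simp
lemma fe20 : ((2:Fin 4) = 0) = False := by simp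
lemma fe30 : ((3:Fin 4) = 0) = False := by simp
lemma fe01 : ((0:Fin 4) = 1) = False := by simp
lemma fe21 : ((2:Fin 4) = 1) = False := by simp
lemma fe31 : ((3:Fin 4) = 1) = False := by simp
lemma fe02 : ((0:Fin 4) = 2) = False := by simp
lemma fe12 : ((1:Fin 4) = 2) = False := by simp
lemma fe32 : ((3:Fin 4) = 2) = False := by simp
lemma fe03 : ((0:Fin 4) = 3) = False := by simp
lemma fe13 : ((1:Fin 4) = 3) = False := by simp
lemma fe23 : ((2:Fin 4) = 3) = False := by simp

set_option maxHeartbeats 1000000 in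
lemma classify (d : Fin 4 →₀ ℕ) (h : d 0 + d 1 + d 2 + d 3 = 2) :
    d = mm 0 0 ∨ d = mm 1 1 ∨ d = mm 2 2 ∨ d = mm 3 3 ∨ d = mm 0 1 ∨ d = mm 0 2 ∨
    d = mm 0 3 ∨ d = mm 1 2 ∨ d = mm 1 3 ∨ d = mm 2 3 := by
  simp only [fext_iff, mm_apply, fe10, fe20, fe30, fe01, fe21, fe31, fe02, fe12, fe32, fe03,
    fe13, fe23, if_true, if_false, ite_true, ite_false]
  have h0 : d 0 = 0 ∨ d 0 = 1 ∨ d 0 = 2 := by omega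
  have h1 : d 1 = 0 ∨ d 1 = 1 ∨ d 1 = 2 := by omega
  have h2 : d 2 = 0 ∨ d 2 = 1 ∨ d 2 = 2 := by omega
  have h3 : d 3 = 0 ∨ d 3 = 1 ∨ d 3 = 2 := by omega
  rcases h0 with h0|h0|h0 <;> rcases h1 with h1|h1|h1 <;> rcases h2 with h2|h2|h2 <;>
    rcases h3 with h3|h3|h3 <;> first | (exfalso; omega) | simp [h0, h1, h2, h3]

lemma X_mul_X {F : Type*} [Field F] (i j : Fin 4) :
    (X i * X j : MvPolynomial (Fin 4) F) = monomial (mm i j) 1 := by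
  rw [X, X, monomial_mul, one_mul, mm]

lemma mm_sum (i j : Fin 4) : mm i j 0 + mm i j 1 + mm i j 2 + mm i j 3 = 2 := by
  fin_cases i <;> fin_cases j <;> simp [mm_apply]

set_option maxHeartbeats 1000000 in
lemma decomp {F : Type*} [Field F] (f : MvPolynomial (Fin 4) F) (hf : f.IsHomogeneous 2) :
    f = coeff (mm 0 0) f • (X 0 * X 0) + coeff (mm 1 1) f • (X 1 * X 1)
      + coeff (mm 2 2) f • (X 2 * X 2) + coeff (mm 3 3) f • (X 3 * X 3)
      + coeff (mm 0 1) f • (X 0 * X 1) + coeff (mm 0 2) f • (X 0 * X 2)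
      + coeff (mm 0 3) f • (X 0 * X 3) + coeff (mm 1 2) f • (X 1 * X 2)
      + coeff (mm 1 3) f • (X 1 * X 3) + coeff (mm 2 3) f • (X 2 * X 3) := by
  apply MvPolynomial.ext
  intro d
  simp only [coeff_add, coeff_smul, X_mul_X, coeff_monomial, smul_eq_mul, mul_ite, mul_one,
    mul_zero]
  by_cases hd : d 0 + d 1 + d 2 + d 3 = 2
  · rcases classify d hd with rfl|rfl|rfl|rfl|rfl|rfl|rfl|rfl|rfl|rfl <;>
      simp [fext_iff, mm_apply]
  · have h0 : coeff d f = 0 := by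
      by_contra hc; exact hd (deg_two hf hc)
    have hz : ∀ i j : Fin 4, (if mm i j = d then coeff (mm i j) f else 0) = 0 := by
      intro i j
      rw [if_neg]
      intro hmd
      apply hd
      rw [← hmd]
      exact mm_sum i j
    rw [h0, hz, hz, hz, hz, hz, hz, hz, hz, hz, hz]
    simp

lemma eval_decomp {F : Type*} [Field F] (f : MvPolynomial (Fin 4) F) (hf : f.IsHomogeneous 2)
    (v : Fin 4 → F) :
    eval v f = coeff (mm 0 0) f * (v 0 * v 0) + coeff (mm 1 1) f * (v 1 * v 1)
      + coeff (mm 2 2) f * (v 2 * v 2) + coeff (mm 3 3) f * (v 3 * v 3)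
      + coeff (mm 0 1) f * (v 0 * v 1) + coeff (mm 0 2) f * (v 0 * v 2)
      + coeff (mm 0 3) f * (v 0 * v 3) + coeff (mm 1 2) f * (v 1 * v 2)
      + coeff (mm 1 3) f * (v 1 * v 3) + coeff (mm 2 3) f * (v 2 * v 3) := by
  conv_lhs => rw [decomp f hf]
  simp [smul_eval]

lemma aeval_eq_eval' {F : Type*} [Field F] (v : Fin 4 → F) (g : MvPolynomial (Fin 4) F) :
    aeval v g = eval v g := by
  rw [aeval_def, Algebra.algebraMap_self]
  rfl

theorem stmt6 (F : Type*) [Field F] [Fintype F]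
    (T : Set (PG3 F))
    (hT : T = {p : PG3 F | p.rep 2 = 0 ∧ p.rep 3 = 0} ∪
              {p : PG3 F | p.rep 0 = 0 ∧ p.rep 1 = 0}) :
    I2 F T = Submodule.span F {X 0 * X 2, X 0 * X 3, X 1 * X 2, X 1 * X 3} ∧
    Module.finrank F (I2 F T) = 4 ∧
    Vz F (I2 F T) = T ∧
    rk F T = 6 := by
  -- the four generators lie in `I2 F T`
  have hmemI2 : ∀ i j : Fin 4, (i = 0 ∨ i = 1) → (j = 2 ∨ j = 3) →
      (X i * X j : MvPolynomial (Fin 4) F) ∈ I2 F T := by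
    intro i j hi hj
    refine Submodule.mem_inf.2 ⟨?_, ?_⟩
    · rw [mem_homogeneousSubmodule]
      simpa using (isHomogeneous_X F i).mul (isHomogeneous_X F j)
    · simp only [Submodule.mem_iInf]
      intro p hp
      rw [LinearMap.mem_ker, AlgHom.toLinearMap_apply, map_mul, aeval_X, aeval_X]
      rw [hT] at hp
      rcases hp with ⟨ha, hb⟩ | ⟨ha, hb⟩
      · rcases hj with rfl | rfl
        · rw [ha, mul_zero]
        · rw [hb, mul_zero]
      · rcases hi with rfl | rfl
        · rw [ha, zero_mul]
        · rw [hb, zero_mul]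
  have hspan_le : Submodule.span F {X 0 * X 2, X 0 * X 3, X 1 * X 2, X 1 * X 3} ≤ I2 F T := by
    rw [Submodule.span_le]
    intro g hg
    simp only [Set.mem_insert_iff, Set.mem_singleton_iff] at hg
    rcases hg with rfl | rfl | rfl | rfl
    · exact hmemI2 0 2 (Or.inl rfl) (Or.inl rfl)
    · exact hmemI2 0 3 (Or.inl rfl) (Or.inr rfl)
    · exact hmemI2 1 2 (Or.inr rfl) (Or.inl rfl)
    · exact hmemI2 1 3 (Or.inr rfl) (Or.inr rfl)
  have hle_span : I2 F T ≤ Submodule.span F {X 0 * X 2, X 0 * X 3, X 1 * X 2, X 1 * X 3} := by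
    intro f hf
    obtain ⟨hfh', hfk⟩ := Submodule.mem_inf.1 hf
    have hfh : f.IsHomogeneous 2 := (mem_homogeneousSubmodule _ _).1 hfh'
    simp only [Submodule.mem_iInf] at hfk
    have hker : ∀ p ∈ T, eval p.rep f = 0 := by
      intro p hp
      have h := hfk p hp
      rw [LinearMap.mem_ker, AlgHom.toLinearMap_apply, aeval_eq_eval'] at h
      exact h
    have key : ∀ v : Fin 4 → F, v ≠ 0 →
        ((v 2 = 0 ∧ v 3 = 0) ∨ (v 0 = 0 ∧ v 1 = 0)) → eval v f = 0 := by
      intro v hv hcase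
      obtain ⟨a, ha⟩ := Projectivization.exists_smul_eq_mk_rep F v hv
      have hmem : Projectivization.mk F v hv ∈ T := by
        rw [hT]
        rcases hcase with ⟨hx, hy⟩ | ⟨hx, hy⟩
        · left
          constructor <;> rw [← ha] <;> simp [Units.smul_def, hx, hy]
        · right
          constructor <;> rw [← ha] <;> simp [Units.smul_def, hx, hy]
      have h0 := hker _ hmem
      rw [← ha] at h0
      have hsc : eval (a • v) f = ((a : F))^2 * eval v f := by
        rw [eval_decomp f hfh, eval_decomp f hfh]
        simp only [Units.smul_def, Pi.smul_apply, smul_eq_mul]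
        ring
      rw [hsc, mul_eq_zero] at h0
      rcases h0 with h0 | h0
      · exact absurd h0 (pow_ne_zero 2 (Units.ne_zero a))
      · exact h0
    have c00 : coeff (mm 0 0) f = 0 := by
      have h := key ![1,0,0,0] (by
        intro h; have := congrFun h 0; norm_num at this) (Or.inl (by simp))
      rw [eval_decomp f hfh] at h
      simpa using h
    have c11 : coeff (mm 1 1) f = 0 := by
      have h := key ![0,1,0,0] (by
        intro h; have := congrFun h 1; norm_num at this) (Or.inl (by simp))
      rw [eval_decomp f hfh] at h
      simpa using h
    have c22 : coeff (mm 2 2) f = 0 := by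
      have h := key ![0,0,1,0] (by
        intro h; have := congrFun h 2; simp at this) (Or.inr (by norm_num))
      rw [eval_decomp f hfh] at h
      simpa using h
    have c33 : coeff (mm 3 3) f = 0 := by
      have h := key ![0,0,0,1] (by
        intro h; have := congrFun h 3; simp at this) (Or.inr (by norm_num))
      rw [eval_decomp f hfh] at h
      simpa using h
    have c01 : coeff (mm 0 1) f = 0 := by
      have h := key ![1,1,0,0] (by
        intro h; have := congrFun h 0; norm_num at this) (Or.inl (by simp))
      rw [eval_decomp f hfh] at h
      simpa [c00, c11] using h
    have c23 : coeff (mm 2 3) f = 0 := by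
      have h := key ![0,0,1,1] (by
        intro h; have := congrFun h 2; simp at this) (Or.inr (by norm_num))
      rw [eval_decomp f hfh] at h
      simpa [c22, c33] using h
    have hfeq := decomp f hfh
    rw [c00, c11, c22, c33, c01, c23] at hfeq
    simp only [zero_smul, zero_add, add_zero] at hfeq
    rw [hfeq]
    refine Submodule.add_mem _ (Submodule.add_mem _ (Submodule.add_mem _ ?_ ?_) ?_) ?_ <;>
      exact Submodule.smul_mem _ _ (Submodule.subset_span (by simp))
  have heq : I2 F T = Submodule.span F {X 0 * X 2, X 0 * X 3, X 1 * X 2, X 1 * X 3} :=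
    le_antisymm hle_span hspan_le
  have hli : LinearIndependent F
      ![(X 0 * X 2 : MvPolynomial (Fin 4) F), X 0 * X 3, X 1 * X 2, X 1 * X 3] := by
    have hb : ![(X 0 * X 2 : MvPolynomial (Fin 4) F), X 0 * X 3, X 1 * X 2, X 1 * X 3]
        = (⇑(basisMonomials (Fin 4) F)) ∘ ![mm 0 2, mm 0 3, mm 1 2, mm 1 3] := by
      funext k
      fin_cases k <;> simp [X_mul_X, coe_basisMonomials]
    rw [hb]
    refine (basisMonomials (Fin 4) F).linearIndependent.comp _ ?_
    have h1 : mm 0 2 ≠ mm 0 3 := by rw [Ne, fext_iff]; simp [mm_apply]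
    have h2 : mm 0 2 ≠ mm 1 2 := by rw [Ne, fext_iff]; simp [mm_apply]
    have h3 : mm 0 2 ≠ mm 1 3 := by rw [Ne, fext_iff]; simp [mm_apply]
    have h4 : mm 0 3 ≠ mm 1 2 := by rw [Ne, fext_iff]; simp [mm_apply]
    have h5 : mm 0 3 ≠ mm 1 3 := by rw [Ne, fext_iff]; simp [mm_apply]
    have h6 : mm 1 2 ≠ mm 1 3 := by rw [Ne, fext_iff]; simp [mm_apply]
    intro x y hxy
    fin_cases x <;> fin_cases y <;>
      simp only [Matrix.cons_val_zero, Matrix.cons_val_one, Matrix.head_cons, Fin.mk_zero,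
        Fin.mk_one, Matrix.cons_val_two, Matrix.tail_cons, Matrix.cons_val_three] at hxy <;>
      first
        | rfl
        | exact absurd hxy (by tauto)
  have hrange : Set.range ![(X 0 * X 2 : MvPolynomial (Fin 4) F), X 0 * X 3, X 1 * X 2, X 1 * X 3]
      = {X 0 * X 2, X 0 * X 3, X 1 * X 2, X 1 * X 3} := by
    ext g
    simp only [Matrix.range_cons, Matrix.range_empty, Set.union_empty, Set.union_singleton,
      Set.mem_union, Set.mem_singleton_iff, Set.mem_insert_iff]
    tauto
  have hfr : Module.finrank F (I2 F T) = 4 := by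
    rw [heq, ← hrange]
    rw [finrank_span_eq_card hli]
    simp
  refine ⟨heq, hfr, ?_, ?_⟩
  · apply Set.Subset.antisymm
    · intro p hp
      have h02 := hp _ (hmemI2 0 2 (Or.inl rfl) (Or.inl rfl))
      have h03 := hp _ (hmemI2 0 3 (Or.inl rfl) (Or.inr rfl))
      have h12 := hp _ (hmemI2 1 2 (Or.inr rfl) (Or.inl rfl))
      have h13 := hp _ (hmemI2 1 3 (Or.inr rfl) (Or.inr rfl))
      simp only [eval_mul, eval_X] at h02 h03 h12 h13
      rw [hT]
      by_cases h0 : p.rep 0 = 0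
      · by_cases h1 : p.rep 1 = 0
        · right; exact ⟨h0, h1⟩
        · left
          exact ⟨(mul_eq_zero.1 h12).resolve_left h1, (mul_eq_zero.1 h13).resolve_left h1⟩
      · left
        exact ⟨(mul_eq_zero.1 h02).resolve_left h0, (mul_eq_zero.1 h03).resolve_left h0⟩
    · intro p hp f hf
      obtain ⟨hfh', hfk⟩ := Submodule.mem_inf.1 hf
      simp only [Submodule.mem_iInf] at hfk
      have h := hfk p hp
      rw [LinearMap.mem_ker, AlgHom.toLinearMap_apply, aeval_eq_eval'] at h
      exact h
  · rw [rk, hfr]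
end
end

section
/- The number of unordered 4-element subsets of points of PG(3,q) that lie in a common plane and are in general position in that plane (no three collinear) equals q³(q⁴−1)(q³−1)(q+1)/24. -/
noncomputable section

/-- A set of points of `PG(3,F)` is coplanar if it lies in the projective plane
corresponding to some 3-dimensional linear subspace. -/
def Coplanar' (F : Type*) [Field F] (s : Finset (PG3 F)) : Prop :=
  ∃ W : Submodule F (Fin 4 → F), Module.finrank F W = 3 ∧ ∀ p ∈ s, p.rep ∈ W

/-- A set of points of `PG(3,F)` is collinear if it lies in the projective line
corresponding to some 2-dimensional linear subspace. -/
def Collinear' (F : Type*) [Field F] (t : Finset (PG3 F)) : Prop :=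
  ∃ W : Submodule F (Fin 4 → F), Module.finrank F W = 2 ∧ ∀ p ∈ t, p.rep ∈ W

namespace PGaux
set_option linter.unusedSectionVars false

open Projectivization Submodule Module

variable {F : Type*} [Field F] [Fintype F]

/-- ordered version of the predicate -/
def Good (f : Fin 4 → PG3 F) : Prop :=
  (∀ i j k : Fin 4, i < j → j < k →
      LinearIndependent F ![(f i).rep, (f j).rep, (f k).rep]) ∧
    ¬ LinearIndependent F (fun i => (f i).rep)

lemma pair_indep_iff (p q : PG3 F) :
    LinearIndependent F ![p.rep, q.rep] ↔ p ≠ q := by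
  rw [linearIndependent_fin2]
  constructor
  · rintro ⟨-, h⟩ rfl
    exact h 1 (one_smul _ _)
  · intro hne
    refine ⟨q.rep_nonzero, fun a ha => hne ?_⟩
    have := (mk_eq_mk_iff' F _ _ p.rep_nonzero q.rep_nonzero).2 ⟨a, ha⟩
    rwa [mk_rep, mk_rep] at this

lemma not_indep_pair_self (x : Fin 4 → F) : ¬ LinearIndependent F ![x, x] := by
  rw [linearIndependent_fin2]
  rintro ⟨-, h⟩
  exact h 1 (one_smul _ _)

lemma indep2_of_indep3 {a b c : Fin 4 → F} (h : LinearIndependent F ![a, b, c]) :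
    LinearIndependent F ![a, b] := by
  have h2 := h.comp ![0, 1] (by decide)
  have : (![a, b, c] ∘ ![0, 1] : Fin 2 → Fin 4 → F) = ![a, b] := by
    funext i; fin_cases i <;> rfl
  rwa [this] at h2

lemma vec3_snoc (a b c : Fin 4 → F) :
    (![a, b, c] : Fin 3 → Fin 4 → F) = Fin.snoc ![a, b] c := by
  funext i; fin_cases i <;> rfl

lemma triple_iff {a b c : Fin 4 → F} :
    LinearIndependent F ![a, b, c] ↔
      LinearIndependent F ![a, b] ∧ c ∉ span F (Set.range ![a, b]) := by
  rw [vec3_snoc, linearIndependent_fin_snoc]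

/-- KEY counting lemma: points of PG3 lying in a subspace `W`. -/
lemma card_rep_mem (W : Submodule F (Fin 4 → F)) :
    Nat.card {p : PG3 F // p.rep ∈ W} * (Fintype.card F - 1) =
      Fintype.card F ^ (Module.finrank F W) - 1 := by
  classical
  have hmk : ∀ (x : PG3 F) (u : Fˣ) (h : (u : F) • x.rep ≠ 0),
      Projectivization.mk F ((u : F) • x.rep) h = x := by
    intro x u h
    conv_rhs => rw [← mk_rep x]
    exact (mk_eq_mk_iff F _ _ h x.rep_nonzero).2 ⟨u, rfl⟩
  have e : ({p : PG3 F // p.rep ∈ W} × Fˣ) ≃ {v : W // v ≠ 0} := by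
    refine Equiv.ofBijective
      (fun pu => ⟨⟨(pu.2 : F) • pu.1.1.rep, W.smul_mem _ pu.1.2⟩, fun h => pu.1.1.rep_nonzero
        (by simpa [Submodule.mk_eq_zero, smul_eq_zero, Units.ne_zero] using h)⟩) ⟨?_, ?_⟩
    · rintro ⟨⟨p, hp⟩, u⟩ ⟨⟨p', hp'⟩, u'⟩ h
      have h' : (u : F) • p.rep = (u' : F) • p'.rep :=
        congrArg (fun z => ((z.1 : W) : Fin 4 → F)) h
      have h0 : (u : F) • p.rep ≠ 0 := by simp [p.rep_nonzero]
      have h0' : (u' : F) • p'.rep ≠ 0 := by simp [p'.rep_nonzero]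
      have hpp : p = p' := by
        rw [← hmk p u h0, ← hmk p' u' h0']
        congr 1
      subst hpp
      have huu : u = u' := Units.ext (smul_left_injective F p.rep_nonzero (M := Fin 4 → F) h')
      subst huu
      rfl
    · rintro ⟨⟨v, hvW⟩, hv0⟩
      have hv : v ≠ 0 := by simpa [Subtype.ext_iff] using hv0
      obtain ⟨a, ha⟩ := (mk_eq_mk_iff F _ _
        (Projectivization.mk F v hv).rep_nonzero hv).1 (mk_rep _)
      refine ⟨⟨⟨Projectivization.mk F v hv, ?_⟩, a⁻¹⟩, ?_⟩
      · rw [← ha]; exact W.smul_mem _ hvW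
      · apply Subtype.ext
        apply Subtype.ext
        show ((a⁻¹ : Fˣ) : F) • (Projectivization.mk F v hv).rep = v
        rw [← ha]
        show ((a⁻¹ : Fˣ) : F) • ((a : F) • v) = v
        rw [smul_smul]
        simp
  have h1 := Nat.card_congr e
  rw [Nat.card_prod] at h1
  have h2 : Nat.card Fˣ = Fintype.card F - 1 := by
    rw [Nat.card_eq_fintype_card, Fintype.card_units]
  have h3 : Nat.card {v : W // v ≠ 0} = Fintype.card F ^ (Module.finrank F W) - 1 := by
    rw [Nat.card_eq_fintype_card]
    show Fintype.card {v : W // ¬ v = 0} = _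
    rw [Fintype.card_subtype_compl, Fintype.card_subtype_eq,
      card_eq_pow_finrank (K := F) (V := W)]
  rw [h2, h3] at h1
  exact h1

lemma two_le_cardF : 2 ≤ Fintype.card F := Fintype.one_lt_card

lemma card_PG3 : Nat.card (PG3 F) * (Fintype.card F - 1) = Fintype.card F ^ 4 - 1 := by
  have e : {p : PG3 F // p.rep ∈ (⊤ : Submodule F (Fin 4 → F))} ≃ PG3 F :=
    Equiv.subtypeUnivEquiv (fun p => Submodule.mem_top)
  have h := card_rep_mem (F := F) ⊤
  rwa [Nat.card_congr e, finrank_top, Module.finrank_fin_fun] at h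

lemma card_PG3' : Nat.card (PG3 F) =
    Fintype.card F ^ 3 + Fintype.card F ^ 2 + Fintype.card F + 1 := by
  have h2 := two_le_cardF (F := F)
  obtain ⟨m, hm⟩ : ∃ m, Fintype.card F = m + 1 := ⟨Fintype.card F - 1, by omega⟩
  have hm1 : 1 ≤ m := by omega
  have h := card_PG3 (F := F)
  rw [hm] at h ⊢
  have hsub : m + 1 - 1 = m := by omega
  rw [hsub] at h
  have h4 : (m + 1) ^ 4 - 1 = ((m+1)^3 + (m+1)^2 + (m+1) + 1) * m :=
    Nat.sub_eq_of_eq_add (by ring)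
  rw [h4] at h
  exact Nat.eq_of_mul_eq_mul_right (by omega) h

lemma card_line {W : Submodule F (Fin 4 → F)} (hW : Module.finrank F W = 2) :
    Nat.card {p : PG3 F // p.rep ∈ W} = Fintype.card F + 1 := by
  have h2 := two_le_cardF (F := F)
  obtain ⟨m, hm⟩ : ∃ m, Fintype.card F = m + 1 := ⟨Fintype.card F - 1, by omega⟩
  have h := card_rep_mem W
  rw [hW] at h
  rw [hm] at h ⊢
  have hsub : m + 1 - 1 = m := by omega
  rw [hsub] at h
  have h4 : (m + 1) ^ 2 - 1 = ((m + 1) + 1) * m := Nat.sub_eq_of_eq_add (by ring)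
  rw [h4] at h
  exact Nat.eq_of_mul_eq_mul_right (by omega) h

instance : Finite (PG3 F) := Quotient.finite _

lemma snoc40 {α : Type*} (g : Fin 3 → α) (x : α) : (Fin.snoc g x : Fin 4 → α) 0 = g 0 := rfl
lemma snoc41 {α : Type*} (g : Fin 3 → α) (x : α) : (Fin.snoc g x : Fin 4 → α) 1 = g 1 := rfl
lemma snoc42 {α : Type*} (g : Fin 3 → α) (x : α) : (Fin.snoc g x : Fin 4 → α) 2 = g 2 := rfl
lemma snoc43 {α : Type*} (g : Fin 3 → α) (x : α) : (Fin.snoc g x : Fin 4 → α) 3 = x := rfl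
lemma snoc30 {α : Type*} (g : Fin 2 → α) (x : α) : (Fin.snoc g x : Fin 3 → α) 0 = g 0 := rfl
lemma snoc31 {α : Type*} (g : Fin 2 → α) (x : α) : (Fin.snoc g x : Fin 3 → α) 1 = g 1 := rfl
lemma snoc32 {α : Type*} (g : Fin 2 → α) (x : α) : (Fin.snoc g x : Fin 3 → α) 2 = x := rfl

section coeffs

variable {v0 v1 v2 : Fin 4 → F}

lemma w_ne (h : LinearIndependent F ![v0, v1, v2]) (b c : F) :
    v0 + b • v1 + c • v2 ≠ 0 := by
  intro h0
  have key := Fintype.linearIndependent_iff.1 h ![1, b, c] (by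
    rw [Fin.sum_univ_three]
    simpa using h0) 0
  simp at key

lemma indepA (h : LinearIndependent F ![v0, v1, v2]) {b c : F} (hc : c ≠ 0) :
    LinearIndependent F ![v0, v1, v0 + b • v1 + c • v2] := by
  rw [Fintype.linearIndependent_iff]
  intro t ht
  rw [Fin.sum_univ_three] at ht
  simp only [Matrix.cons_val_zero, Matrix.cons_val_one, Matrix.head_cons,
    Matrix.cons_val_two, Matrix.tail_cons] at ht
  have key := Fintype.linearIndependent_iff.1 h ![t 0 + t 2, t 1 + t 2 * b, t 2 * c] (by
    rw [Fin.sum_univ_three]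
    simp only [Matrix.cons_val_zero, Matrix.cons_val_one, Matrix.head_cons,
      Matrix.cons_val_two, Matrix.tail_cons]
    rw [← ht]; module)
  have k2 := key 2
  simp only [Matrix.cons_val_two, Matrix.tail_cons, Matrix.head_cons] at k2
  have h2 : t 2 = 0 := by
    rcases mul_eq_zero.1 k2 with h' | h'
    · exact h'
    · exact absurd h' hc
  have k0 := key 0
  have k1 := key 1
  simp only [Matrix.cons_val_zero, Matrix.cons_val_one, Matrix.head_cons, h2] at k0 k1
  intro i
  fin_cases i <;> simp_all

lemma indepB (h : LinearIndependent F ![v0, v1, v2]) {b c : F} (hb : b ≠ 0) :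
    LinearIndependent F ![v0, v2, v0 + b • v1 + c • v2] := by
  rw [Fintype.linearIndependent_iff]
  intro t ht
  rw [Fin.sum_univ_three] at ht
  simp only [Matrix.cons_val_zero, Matrix.cons_val_one, Matrix.head_cons,
    Matrix.cons_val_two, Matrix.tail_cons] at ht
  have key := Fintype.linearIndependent_iff.1 h ![t 0 + t 2, t 2 * b, t 1 + t 2 * c] (by
    rw [Fin.sum_univ_three]
    simp only [Matrix.cons_val_zero, Matrix.cons_val_one, Matrix.head_cons,
      Matrix.cons_val_two, Matrix.tail_cons]
    rw [← ht]; module)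
  have k1 := key 1
  simp only [Matrix.cons_val_one, Matrix.head_cons] at k1
  have h2 : t 2 = 0 := by
    rcases mul_eq_zero.1 k1 with h' | h'
    · exact h'
    · exact absurd h' hb
  have k0 := key 0
  have k2 := key 2
  simp only [Matrix.cons_val_zero, Matrix.cons_val_two, Matrix.tail_cons,
    Matrix.head_cons, h2] at k0 k2
  intro i
  fin_cases i <;> simp_all

lemma indepC (h : LinearIndependent F ![v0, v1, v2]) {b c : F} :
    LinearIndependent F ![v1, v2, v0 + b • v1 + c • v2] := by
  rw [Fintype.linearIndependent_iff]
  intro t ht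
  rw [Fin.sum_univ_three] at ht
  simp only [Matrix.cons_val_zero, Matrix.cons_val_one, Matrix.head_cons,
    Matrix.cons_val_two, Matrix.tail_cons] at ht
  have key := Fintype.linearIndependent_iff.1 h ![t 2, t 0 + t 2 * b, t 1 + t 2 * c] (by
    rw [Fin.sum_univ_three]
    simp only [Matrix.cons_val_zero, Matrix.cons_val_one, Matrix.head_cons,
      Matrix.cons_val_two, Matrix.tail_cons]
    rw [← ht]; module)
  have k0 := key 0
  simp only [Matrix.cons_val_zero] at k0
  have k1 := key 1
  have k2 := key 2
  simp only [Matrix.cons_val_one, Matrix.head_cons, Matrix.cons_val_two,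
    Matrix.tail_cons, k0] at k1 k2
  intro i
  fin_cases i <;> simp_all

lemma indep_smul_last {x y z : Fin 4 → F} (u : Fˣ) (h : LinearIndependent F ![x, y, z]) :
    LinearIndependent F ![x, y, (u : F) • z] := by
  have h2 := h.units_smul ![1, 1, u]
  have e : (![1, 1, u] • ![x, y, z] : Fin 3 → Fin 4 → F) = ![x, y, (u : F) • z] := by
    funext i
    fin_cases i <;> simp [Pi.smul_apply', Units.smul_def]
  rwa [e] at h2

end coeffs

lemma card_fiber4 (g : Fin 3 → PG3 F)
    (hg : LinearIndependent F ![(g 0).rep, (g 1).rep, (g 2).rep]) :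
    Nat.card {p : PG3 F // Good (Fin.snoc g p)} = (Fintype.card F - 1) ^ 2 := by
  classical
  set v0 := (g 0).rep with hv0
  set v1 := (g 1).rep with hv1
  set v2 := (g 2).rep with hv2
  have hw : ∀ b c : F, v0 + b • v1 + c • v2 ≠ 0 := fun b c => w_ne hg b c
  set Φ : Fˣ × Fˣ → PG3 F := fun bc =>
    Projectivization.mk F (v0 + (bc.1 : F) • v1 + (bc.2 : F) • v2) (hw _ _) with hΦ
  have hΦrep : ∀ bc : Fˣ × Fˣ, ∃ u : Fˣ,
      (Φ bc).rep = (u : F) • (v0 + (bc.1 : F) • v1 + (bc.2 : F) • v2) := by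
    intro bc
    obtain ⟨a, ha⟩ := (mk_eq_mk_iff F _ _ (Φ bc).rep_nonzero (hw _ _)).1 (mk_rep (Φ bc))
    exact ⟨a, ha.symm⟩
  have hsnocrep : ∀ p : PG3 F,
      (fun i => ((Fin.snoc g p : Fin 4 → PG3 F) i).rep)
        = Fin.snoc (fun i : Fin 3 => (g i).rep) p.rep := by
    intro p
    funext i
    refine Fin.lastCases ?_ (fun j => ?_) i
    · show ((Fin.snoc g p : Fin 4 → PG3 F) (Fin.last 3)).rep =
        (Fin.snoc (fun i : Fin 3 => (g i).rep) p.rep : Fin 4 → Fin 4 → F) (Fin.last 3)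
      rw [Fin.snoc_last, Fin.snoc_last]
    · simp [Fin.snoc_castSucc]
  have hfun3 : (fun i : Fin 3 => (g i).rep) = ![v0, v1, v2] := by
    funext i; fin_cases i <;> rfl
  have hGood : ∀ bc : Fˣ × Fˣ, Good (Fin.snoc g (Φ bc)) := by
    rintro ⟨b, c⟩
    obtain ⟨u, hu⟩ := hΦrep (b, c)
    constructor
    · intro i j k hij hjk
      fin_cases i <;> fin_cases j <;> fin_cases k <;>
        simp only [snoc40, snoc41, snoc42, snoc43] <;>
        first
          | exact absurd hij (by decide)
          | exact absurd hjk (by decide)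
          | exact hg
          | (show LinearIndependent F ![v0, v1, (Φ (b, c)).rep]
             rw [hu]; exact indep_smul_last u (indepA hg c.ne_zero))
          | (show LinearIndependent F ![v0, v2, (Φ (b, c)).rep]
             rw [hu]; exact indep_smul_last u (indepB hg b.ne_zero))
          | (show LinearIndependent F ![v1, v2, (Φ (b, c)).rep]
             rw [hu]; exact indep_smul_last u (indepC hg))
    · rw [hsnocrep, linearIndependent_fin_snoc, hfun3]
      rintro ⟨-, hnot⟩
      apply hnot
      rw [hu]
      refine Submodule.smul_mem _ _ ?_
      have m0 : v0 ∈ Submodule.span F (Set.range ![v0, v1, v2]) :=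
        Submodule.subset_span ⟨0, rfl⟩
      have m1 : v1 ∈ Submodule.span F (Set.range ![v0, v1, v2]) :=
        Submodule.subset_span ⟨1, rfl⟩
      have m2 : v2 ∈ Submodule.span F (Set.range ![v0, v1, v2]) :=
        Submodule.subset_span ⟨2, rfl⟩
      exact Submodule.add_mem _ (Submodule.add_mem _ m0 (Submodule.smul_mem _ _ m1))
        (Submodule.smul_mem _ _ m2)
  have hinj : Function.Injective Φ := by
    rintro ⟨b, c⟩ ⟨b', c'⟩ h
    obtain ⟨a, ha⟩ := (mk_eq_mk_iff' F _ _ (hw _ _) (hw _ _)).1 h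
    have key := Fintype.linearIndependent_iff.1 hg
      ![a - 1, a * (b' : F) - (b : F), a * (c' : F) - (c : F)] (by
      rw [Fin.sum_univ_three]
      simp only [Matrix.cons_val_zero, Matrix.cons_val_one, Matrix.head_cons,
        Matrix.cons_val_two, Matrix.tail_cons]
      have e0 : (a - 1) • v0 + (a * (b' : F) - (b : F)) • v1 + (a * (c' : F) - (c : F)) • v2 =
          a • (v0 + (b' : F) • v1 + (c' : F) • v2) - (v0 + (b : F) • v1 + (c : F) • v2) := by
        module
      rw [e0, ha, sub_self])
    have k0 := key 0
    have k1 := key 1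
    have k2 := key 2
    simp only [Matrix.cons_val_zero, Matrix.cons_val_one, Matrix.head_cons,
      Matrix.cons_val_two, Matrix.tail_cons] at k0 k1 k2
    have ha1 : a = 1 := by
      have := sub_eq_zero.1 k0; exact this
    rw [ha1, one_mul] at k1 k2
    have hb : (b' : F) = (b : F) := sub_eq_zero.1 k1
    have hc : (c' : F) = (c : F) := sub_eq_zero.1 k2
    simp only [Prod.mk.injEq]
    exact ⟨Units.ext hb.symm, Units.ext hc.symm⟩
  have hsurj : ∀ p : PG3 F, Good (Fin.snoc g p) → ∃ bc : Fˣ × Fˣ, Φ bc = p := by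
    intro p hp
    have h013 : LinearIndependent F ![v0, v1, p.rep] := by
      have := hp.1 0 1 3 (by decide) (by decide)
      simpa only [snoc40, snoc41, snoc43] using this
    have h023 : LinearIndependent F ![v0, v2, p.rep] := by
      have := hp.1 0 2 3 (by decide) (by decide)
      simpa only [snoc40, snoc42, snoc43] using this
    have h123 : LinearIndependent F ![v1, v2, p.rep] := by
      have := hp.1 1 2 3 (by decide) (by decide)
      simpa only [snoc41, snoc42, snoc43] using this
    have hdep := hp.2
    rw [hsnocrep, linearIndependent_fin_snoc, hfun3] at hdep
    have hmem : p.rep ∈ Submodule.span F (Set.range ![v0, v1, v2]) := by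
      by_contra hnm
      exact hdep ⟨hg, hnm⟩
    rw [mem_span_range_iff_exists_fun] at hmem
    obtain ⟨t, ht⟩ := hmem
    rw [Fin.sum_univ_three] at ht
    simp only [Matrix.cons_val_zero, Matrix.cons_val_one, Matrix.head_cons,
      Matrix.cons_val_two, Matrix.tail_cons] at ht
    have ht0 : t 0 ≠ 0 := by
      intro h0
      have key := Fintype.linearIndependent_iff.1 h123 ![t 1, t 2, -1] (by
        rw [Fin.sum_univ_three]
        simp only [Matrix.cons_val_zero, Matrix.cons_val_one, Matrix.head_cons,
          Matrix.cons_val_two, Matrix.tail_cons]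
        rw [← ht, h0]; module) 2
      change (-1 : F) = 0 at key
      norm_num at key
    have ht1 : t 1 ≠ 0 := by
      intro h1
      have key := Fintype.linearIndependent_iff.1 h023 ![t 0, t 2, -1] (by
        rw [Fin.sum_univ_three]
        simp only [Matrix.cons_val_zero, Matrix.cons_val_one, Matrix.head_cons,
          Matrix.cons_val_two, Matrix.tail_cons]
        rw [← ht, h1]; module) 2
      change (-1 : F) = 0 at key
      norm_num at key
    have ht2 : t 2 ≠ 0 := by
      intro h2
      have key := Fintype.linearIndependent_iff.1 h013 ![t 0, t 1, -1] (by
        rw [Fin.sum_univ_three]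
        simp only [Matrix.cons_val_zero, Matrix.cons_val_one, Matrix.head_cons,
          Matrix.cons_val_two, Matrix.tail_cons]
        rw [← ht, h2]; module) 2
      change (-1 : F) = 0 at key
      norm_num at key
    refine ⟨(Units.mk0 (t 1 / t 0) (div_ne_zero ht1 ht0),
      Units.mk0 (t 2 / t 0) (div_ne_zero ht2 ht0)), ?_⟩
    rw [hΦ]
    simp only [Units.val_mk0]
    conv_rhs => rw [← mk_rep p]
    apply (mk_eq_mk_iff' F _ _ (hw _ _) p.rep_nonzero).2
    refine ⟨(t 0)⁻¹, ?_⟩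
    rw [← ht]
    match_scalars <;> field_simp
  have e : (Fˣ × Fˣ) ≃ {p : PG3 F // Good (Fin.snoc g p)} :=
    Equiv.ofBijective (fun bc => ⟨Φ bc, hGood bc⟩)
      ⟨fun x y h => hinj (congrArg Subtype.val h),
       fun pp => (hsurj pp.1 pp.2).imp (fun bc h => Subtype.ext h)⟩
  rw [← Nat.card_congr e]
  simp [Nat.card_prod, Nat.card_eq_fintype_card, Fintype.card_units, sq]

lemma card_sigma_const {B : Type*} [Finite B] {fib : B → Type*} [∀ b, Finite (fib b)] {n : ℕ}
    (h : ∀ b, Nat.card (fib b) = n) : Nat.card (Σ b, fib b) = Nat.card B * n := by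
  classical
  haveI : ∀ b, Fintype (fib b) := fun b => Fintype.ofFinite _
  haveI : Fintype B := Fintype.ofFinite _
  have e : (Σ b, fib b) ≃ B × Fin n :=
    (Equiv.sigmaCongrRight (fun b => Fintype.equivFinOfCardEq
      (by rw [← Nat.card_eq_fintype_card]; exact h b))).trans (Equiv.sigmaEquivProd B (Fin n))
  rw [Nat.card_congr e, Nat.card_prod]
  congr 1
  simp [Nat.card_eq_fintype_card]

lemma card_fiber2 (p : PG3 F) :
    Nat.card {r : PG3 F // LinearIndependent F ![p.rep, r.rep]} = Nat.card (PG3 F) - 1 := by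
  classical
  haveI : Fintype (PG3 F) := Fintype.ofFinite _
  have e : {r : PG3 F // LinearIndependent F ![p.rep, r.rep]} ≃ {r : PG3 F // p ≠ r} :=
    Equiv.subtypeEquivRight (fun r => pair_indep_iff p r)
  rw [Nat.card_congr e, Nat.card_eq_fintype_card]
  show Fintype.card {r : PG3 F // ¬ p = r} = _
  rw [Fintype.card_subtype_compl, Fintype.card_subtype_eq', Nat.card_eq_fintype_card]

lemma card_fiber3 {p q : PG3 F} (h : LinearIndependent F ![p.rep, q.rep]) :
    Nat.card {r : PG3 F // LinearIndependent F ![p.rep, q.rep, r.rep]} =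
      Nat.card (PG3 F) - (Fintype.card F + 1) := by
  classical
  haveI : Fintype (PG3 F) := Fintype.ofFinite _
  have e : {r : PG3 F // LinearIndependent F ![p.rep, q.rep, r.rep]} ≃
      {r : PG3 F // ¬ r.rep ∈ Submodule.span F (Set.range ![p.rep, q.rep])} :=
    Equiv.subtypeEquivRight (fun r => by rw [triple_iff]; simp [h])
  have hline : Fintype.card
      {r : PG3 F // r.rep ∈ Submodule.span F (Set.range ![p.rep, q.rep])} =
      Fintype.card F + 1 := by
    rw [← Nat.card_eq_fintype_card]
    exact card_line ((finrank_span_eq_card h).trans (by simp))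
  rw [Nat.card_congr e, Nat.card_eq_fintype_card, Fintype.card_subtype_compl, hline,
    Nat.card_eq_fintype_card]

lemma card_B2 : Nat.card {g : Fin 2 → PG3 F // LinearIndependent F ![(g 0).rep, (g 1).rep]}
    = Nat.card (PG3 F) * (Nat.card (PG3 F) - 1) := by
  classical
  have e : (Σ p : PG3 F, {r : PG3 F // LinearIndependent F ![p.rep, r.rep]}) ≃
      {g : Fin 2 → PG3 F // LinearIndependent F ![(g 0).rep, (g 1).rep]} := by
    refine Equiv.ofBijective (fun x => ⟨![x.1, x.2.1], x.2.2⟩) ⟨?_, ?_⟩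
    · rintro ⟨p, r, hr⟩ ⟨p', r', hr'⟩ h
      simp only [Subtype.mk.injEq] at h
      replace h : ![p, r] = ![p', r'] := congrArg Subtype.val h
      have h0 := congrFun h 0
      have h1 := congrFun h 1
      simp only [Matrix.cons_val_zero, Matrix.cons_val_one, Matrix.head_cons] at h0 h1
      subst h0
      subst h1
      rfl
    · rintro ⟨g, hg⟩
      exact ⟨⟨g 0, g 1, hg⟩, Subtype.ext (by funext i; fin_cases i <;> rfl)⟩
  rw [← Nat.card_congr e]
  exact card_sigma_const (fun p => card_fiber2 p)

lemma card_B3 : Nat.card {g : Fin 3 → PG3 F //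
      LinearIndependent F ![(g 0).rep, (g 1).rep, (g 2).rep]}
    = Nat.card (PG3 F) * (Nat.card (PG3 F) - 1) *
        (Nat.card (PG3 F) - (Fintype.card F + 1)) := by
  classical
  have e : (Σ g : {g : Fin 2 → PG3 F // LinearIndependent F ![(g 0).rep, (g 1).rep]},
      {r : PG3 F // LinearIndependent F ![(g.1 0).rep, (g.1 1).rep, r.rep]}) ≃
      {g : Fin 3 → PG3 F // LinearIndependent F ![(g 0).rep, (g 1).rep, (g 2).rep]} := by
    refine Equiv.ofBijective (fun x => ⟨Fin.snoc x.1.1 x.2.1, x.2.2⟩) ⟨?_, ?_⟩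
    · rintro ⟨⟨g, hg⟩, ⟨r, hr⟩⟩ ⟨⟨g', hg'⟩, ⟨r', hr'⟩⟩ h
      simp only [Subtype.mk.injEq] at h
      replace h : (Fin.snoc g r : Fin 3 → PG3 F) = Fin.snoc g' r' := congrArg Subtype.val h
      have hgg : g = g' := by
        funext i
        have := congrFun h i.castSucc
        rwa [Fin.snoc_castSucc, Fin.snoc_castSucc] at this
      subst hgg
      have hpp : r = r' := by
        have := congrFun h (Fin.last 2)
        rwa [Fin.snoc_last, Fin.snoc_last] at this
      subst hpp
      rfl
    · rintro ⟨g, hg⟩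
      refine ⟨⟨⟨Fin.init g, indep2_of_indep3 hg⟩, ⟨g (Fin.last 2), hg⟩⟩, ?_⟩
      exact Subtype.ext (Fin.snoc_init_self g)
  rw [← Nat.card_congr e, card_sigma_const (fun b => card_fiber3 b.2), card_B2]

set_option maxHeartbeats 1000000 in
lemma card_T : Nat.card {f : Fin 4 → PG3 F // Good f} =
    Nat.card (PG3 F) * (Nat.card (PG3 F) - 1) * (Nat.card (PG3 F) - (Fintype.card F + 1)) *
      (Fintype.card F - 1) ^ 2 := by
  classical
  have e : (Σ g : {g : Fin 3 → PG3 F // LinearIndependent F ![(g 0).rep, (g 1).rep, (g 2).rep]},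
      {p : PG3 F // Good (Fin.snoc g.1 p)}) ≃ {f : Fin 4 → PG3 F // Good f} := by
    refine Equiv.ofBijective (fun x => ⟨Fin.snoc x.1.1 x.2.1, x.2.2⟩) ⟨?_, ?_⟩
    · rintro ⟨⟨g, hg⟩, ⟨p, hp⟩⟩ ⟨⟨g', hg'⟩, ⟨p', hp'⟩⟩ h
      simp only [Subtype.mk.injEq] at h
      have hgg : g = g' := by
        funext i
        have := congrFun h i.castSucc
        rwa [Fin.snoc_castSucc, Fin.snoc_castSucc] at this
      subst hgg
      have hpp : p = p' := by
        have := congrFun h (Fin.last 3)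
        rwa [Fin.snoc_last, Fin.snoc_last] at this
      subst hpp
      rfl
    · rintro ⟨f, hf⟩
      refine ⟨⟨⟨Fin.init f, hf.1 0 1 2 (by decide) (by decide)⟩, ⟨f (Fin.last 3), ?_⟩⟩, ?_⟩
      · have hs : Fin.snoc (Fin.init f) (f (Fin.last 3)) = f := Fin.snoc_init_self f
        rw [hs]
        exact hf
      · exact Subtype.ext (Fin.snoc_init_self f)
  rw [← Nat.card_congr e]
  have h2 := card_sigma_const
    (B := {g : Fin 3 → PG3 F // LinearIndependent F ![(g 0).rep, (g 1).rep, (g 2).rep]})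
    (fib := fun g => {p : PG3 F // Good (Fin.snoc g.1 p)})
    (n := (Fintype.card F - 1) ^ 2)
    (fun b => card_fiber4 b.1 b.2)
  rw [h2, card_B3]

lemma Good.injective {f : Fin 4 → PG3 F} (hf : Good f) : Function.Injective f := by
  have hstep : ∀ i j : Fin 4, i < j → ∃ a b c : Fin 4, a < b ∧ b < c ∧
      ∃ u v : Fin 3, u ≠ v ∧ ![a, b, c] u = i ∧ ![a, b, c] v = j := by decide
  have key : ∀ i j : Fin 4, i < j → f i ≠ f j := by
    intro i j hij heq
    obtain ⟨a, b, c, hab, hbc, u, v, huv, hu, hv⟩ := hstep i j hij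
    have hind := hf.1 a b c hab hbc
    have hM : ∀ t : Fin 3, (![(f a).rep, (f b).rep, (f c).rep]) t = (f (![a, b, c] t)).rep := by
      intro t; fin_cases t <;> rfl
    apply huv
    apply hind.injective
    rw [hM u, hM v, hu, hv, heq]
  intro i j h
  rcases lt_trichotomy i j with h' | h' | h'
  · exact absurd h (key _ _ h')
  · exact h'
  · exact absurd h.symm (key _ _ h')

lemma exists_sorted : ∀ i1 i2 i3 : Fin 4, i1 ≠ i2 → i1 ≠ i3 → i2 ≠ i3 →
    ∃ i j k : Fin 4, i < j ∧ j < k ∧ ({i, j, k} : Finset (Fin 4)) = {i1, i2, i3} := by decide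

lemma good_image [DecidableEq (PG3 F)] {f : Fin 4 → PG3 F} (hf : Good f) :
    (Finset.image f Finset.univ).card = 4 ∧ Coplanar' F (Finset.image f Finset.univ) ∧
      ∀ t ⊆ Finset.image f Finset.univ, t.card = 3 → ¬ Collinear' F t := by
  classical
  have hinj := hf.injective
  refine ⟨?_, ?_, ?_⟩
  · rw [Finset.card_image_of_injective _ hinj]
    simp
  · set W := Submodule.span F (Set.range fun i => (f i).rep) with hW
    have hle4 : Module.finrank F W ≤ 4 := by
      have h := finrank_range_le_card (R := F) (fun i => (f i).rep)
      simpa [Set.finrank] using h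
    have hne4 : Module.finrank F W ≠ 4 := by
      intro h4
      apply hf.2
      rw [linearIndependent_iff_card_eq_finrank_span]
      simpa [Set.finrank] using h4.symm
    have hge3 : 3 ≤ Module.finrank F W := by
      have hsub : Submodule.span F (Set.range ![(f 0).rep, (f 1).rep, (f 2).rep]) ≤ W := by
        apply Submodule.span_mono
        rintro x ⟨m, rfl⟩
        fin_cases m
        exacts [⟨0, rfl⟩, ⟨1, rfl⟩, ⟨2, rfl⟩]
      have h3 := finrank_span_eq_card (R := F) (hf.1 0 1 2 (by decide) (by decide))
      have hmono := Submodule.finrank_mono hsub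
      simp only [Fintype.card_fin] at h3
      omega
    refine ⟨W, by omega, ?_⟩
    intro p hp
    obtain ⟨i, -, rfl⟩ := Finset.mem_image.1 hp
    exact Submodule.subset_span ⟨i, rfl⟩
  · intro t hts hcard3 hcol
    obtain ⟨x, y, z, hxy, hxz, hyz, ht⟩ := Finset.card_eq_three.1 hcard3
    obtain ⟨W, hW2, hWmem⟩ := hcol
    have hx : x ∈ Finset.image f Finset.univ := hts (by rw [ht]; simp)
    have hy : y ∈ Finset.image f Finset.univ := hts (by rw [ht]; simp)
    have hz : z ∈ Finset.image f Finset.univ := hts (by rw [ht]; simp)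
    obtain ⟨i1, -, rfl⟩ := Finset.mem_image.1 hx
    obtain ⟨i2, -, rfl⟩ := Finset.mem_image.1 hy
    obtain ⟨i3, -, rfl⟩ := Finset.mem_image.1 hz
    have h12 : i1 ≠ i2 := fun h => hxy (by rw [h])
    have h13 : i1 ≠ i3 := fun h => hxz (by rw [h])
    have h23 : i2 ≠ i3 := fun h => hyz (by rw [h])
    obtain ⟨i, j, k, hij, hjk, hset⟩ := exists_sorted i1 i2 i3 h12 h13 h23
    have hmem : ∀ m : Fin 4, m ∈ ({i, j, k} : Finset (Fin 4)) → (f m).rep ∈ W := by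
      intro m hm
      rw [hset] at hm
      apply hWmem
      rw [ht]
      simp only [Finset.mem_insert, Finset.mem_singleton] at hm ⊢
      rcases hm with h | h | h
      · exact Or.inl (by rw [h])
      · exact Or.inr (Or.inl (by rw [h]))
      · exact Or.inr (Or.inr (by rw [h]))
    have hind := hf.1 i j k hij hjk
    have h3 : Module.finrank F (Submodule.span F
        (Set.range ![(f i).rep, (f j).rep, (f k).rep])) = 3 := by
      rw [finrank_span_eq_card hind]; simp
    have hle : Submodule.span F (Set.range ![(f i).rep, (f j).rep, (f k).rep]) ≤ W := by
      rw [Submodule.span_le]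
      rintro xx ⟨m, rfl⟩
      fin_cases m
      · exact hmem i (by simp)
      · exact hmem j (by simp)
      · exact hmem k (by simp)
    have hmono := Submodule.finrank_mono hle
    omega

lemma good_of_set [DecidableEq (PG3 F)] {s : Finset (PG3 F)} (hs4 : s.card = 4) (hcop : Coplanar' F s)
    (hncol : ∀ t ⊆ s, t.card = 3 → ¬ Collinear' F t)
    {f : Fin 4 → PG3 F} (hinj : Function.Injective f) (hmem : ∀ i, f i ∈ s) : Good f := by
  classical
  constructor
  · intro i j k hij hjk
    have hij' : f i ≠ f j := fun h => hij.ne (hinj h)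
    have hik' : f i ≠ f k := fun h => (hij.trans hjk).ne (hinj h)
    have hjk' : f j ≠ f k := fun h => hjk.ne (hinj h)
    by_contra hdep
    have hsub : ({f i, f j, f k} : Finset (PG3 F)) ⊆ s := by
      intro x hx
      simp only [Finset.mem_insert, Finset.mem_singleton] at hx
      rcases hx with rfl | rfl | rfl <;> exact hmem _
    have hcard : ({f i, f j, f k} : Finset (PG3 F)).card = 3 := by
      rw [Finset.card_insert_of_notMem (by simp [hij', hik']),
        Finset.card_insert_of_notMem (by simp [hjk']), Finset.card_singleton]
    apply hncol {f i, f j, f k} hsub hcard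
    set W := Submodule.span F (Set.range ![(f i).rep, (f j).rep, (f k).rep]) with hW
    have hle3 : Module.finrank F W ≤ 3 := by
      have h := finrank_range_le_card (R := F) ![(f i).rep, (f j).rep, (f k).rep]
      simpa [Set.finrank] using h
    have hne3 : Module.finrank F W ≠ 3 := by
      intro h3
      apply hdep
      rw [linearIndependent_iff_card_eq_finrank_span]
      simpa [Set.finrank] using h3.symm
    have hge2 : 2 ≤ Module.finrank F W := by
      have hpair : LinearIndependent F ![(f i).rep, (f j).rep] := (pair_indep_iff _ _).2 hij'
      have h2 := finrank_span_eq_card (R := F) hpair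
      have hsub2 : Submodule.span F (Set.range ![(f i).rep, (f j).rep]) ≤ W := by
        apply Submodule.span_mono
        rintro x ⟨m, rfl⟩
        fin_cases m
        exacts [⟨0, rfl⟩, ⟨1, rfl⟩]
      have hmono := Submodule.finrank_mono hsub2
      simp only [Fintype.card_fin] at h2
      omega
    refine ⟨W, by omega, ?_⟩
    intro p hp
    simp only [Finset.mem_insert, Finset.mem_singleton] at hp
    rcases hp with rfl | rfl | rfl
    · exact Submodule.subset_span ⟨0, rfl⟩
    · exact Submodule.subset_span ⟨1, rfl⟩
    · exact Submodule.subset_span ⟨2, rfl⟩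
  · intro hindep
    obtain ⟨W, hW3, hWmem⟩ := hcop
    have h4 : Module.finrank F (Submodule.span F (Set.range fun i => (f i).rep)) = 4 := by
      rw [finrank_span_eq_card hindep]; simp
    have hle : Submodule.span F (Set.range fun i => (f i).rep) ≤ W := by
      rw [Submodule.span_le]
      rintro x ⟨m, rfl⟩
      exact hWmem _ (hmem m)
    have hmono := Submodule.finrank_mono hle
    omega

lemma part1 :
    Nat.card {f : Fin 4 → PG3 F // Good f} =
      Nat.card {s : Finset (PG3 F) // s.card = 4 ∧ Coplanar' F s ∧
        ∀ t ⊆ s, t.card = 3 → ¬ Collinear' F t} * 24 := by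
  classical
  haveI : Fintype (PG3 F) := Fintype.ofFinite _
  haveI : DecidableEq (PG3 F) := Classical.decEq _
  let S := {s : Finset (PG3 F) // s.card = 4 ∧ Coplanar' F s ∧
        ∀ t ⊆ s, t.card = 3 → ¬ Collinear' F t}
  let π : {f : Fin 4 → PG3 F // Good f} → S := fun f =>
    ⟨Finset.image f.1 Finset.univ, good_image f.2⟩
  rw [Nat.card_eq_fintype_card, Nat.card_eq_fintype_card,
    ← Fintype.card_congr (Equiv.sigmaFiberEquiv π), Fintype.card_sigma]
  have hfib : ∀ s : S, Fintype.card {f : {f : Fin 4 → PG3 F // Good f} // π f = s} = 24 := by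
    intro s
    have hcard4 : Fintype.card {x // x ∈ s.1} = 4 := by rw [Fintype.card_coe]; exact s.2.1
    have e : (Fin 4 ≃ {x // x ∈ s.1}) ≃ {f : {f : Fin 4 → PG3 F // Good f} // π f = s} := by
      refine Equiv.ofBijective (fun e => ⟨⟨fun i => (e i : PG3 F),
        good_of_set s.2.1 s.2.2.1 s.2.2.2
          (fun a b h => e.injective (Subtype.ext h)) (fun i => (e i).2)⟩, ?_⟩) ⟨?_, ?_⟩
      · apply Subtype.ext
        show Finset.image (fun i => ((e i : PG3 F))) Finset.univ = s.1
        ext x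
        simp only [Finset.mem_image, Finset.mem_univ, true_and]
        constructor
        · rintro ⟨i, rfl⟩
          exact (e i).2
        · intro hx
          exact ⟨e.symm ⟨x, hx⟩, by simp⟩
      · intro e1 e2 h
        have h' := congrArg (fun z => z.1.1) h
        exact Equiv.ext fun i => Subtype.ext (congrFun h' i)
      · rintro ⟨⟨f, hf⟩, hπ⟩
        have himg : Finset.image f Finset.univ = s.1 := congrArg Subtype.val hπ
        refine ⟨Equiv.ofBijective (fun i => ⟨f i, by
            rw [← himg]; exact Finset.mem_image_of_mem f (Finset.mem_univ i)⟩) ?_,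
          Subtype.ext (Subtype.ext (funext fun i => rfl))⟩
        rw [Fintype.bijective_iff_injective_and_card]
        exact ⟨fun a b h => hf.injective (congrArg Subtype.val h), by simp [hcard4]⟩
    rw [← Fintype.card_congr e, Fintype.card_equiv (Fintype.equivFinOfCardEq hcard4).symm]
    simp [Nat.factorial]
  rw [Finset.sum_congr rfl (fun s _ => hfib s), Finset.sum_const, Finset.card_univ,
    smul_eq_mul]

end PGaux

theorem stmt9 (F : Type*) [Field F] [Fintype F] (q : ℕ) (hq : Fintype.card F = q) :
    24 * Nat.card {s : Finset (PG3 F) // s.card = 4 ∧ Coplanar' F s ∧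
        ∀ t ⊆ s, t.card = 3 → ¬ Collinear' F t} =
      q ^ 3 * (q ^ 4 - 1) * (q ^ 3 - 1) * (q + 1) := by
  classical
  have hpart1 := PGaux.part1 (F := F)
  have hT := PGaux.card_T (F := F)
  have hN := PGaux.card_PG3' (F := F)
  have h2 : 2 ≤ Fintype.card F := PGaux.two_le_cardF (F := F)
  rw [hq] at hT hN h2
  rw [mul_comm, ← hpart1, hT, hN]
  obtain ⟨m, rfl⟩ : ∃ m, q = m + 1 := ⟨q - 1, by omega⟩
  have e1 : (m+1)^3 + (m+1)^2 + (m+1) + 1 - 1 = (m+1)^3 + (m+1)^2 + (m+1) := by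
    generalize (m+1)^3 = a
    generalize (m+1)^2 = b
    omega
  have e2 : (m+1)^3 + (m+1)^2 + (m+1) + 1 - ((m+1) + 1) = (m+1)^3 + (m+1)^2 := by
    generalize (m+1)^3 = a
    generalize (m+1)^2 = b
    omega
  have e4 : (m+1)^4 - 1 = m^4 + 4*m^3 + 6*m^2 + 4*m := Nat.sub_eq_of_eq_add (by ring)
  have e5 : (m+1)^3 - 1 = m^3 + 3*m^2 + 3*m := Nat.sub_eq_of_eq_add (by ring)
  have e6 : m + 1 - 1 = m := by omega
  rw [e1, e2, e4, e5, e6]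
  ring
end
end

section
/- The number of unordered pairs of skew (disjoint) lines in PG(3,q) equals (1+q²)(1+q+q²) · q⁴ / 2. In particular, for q = 3 this number is 5265. -/
noncomputable section

/-- A line of `PG(3,F)`: the set of points of a 2-dimensional linear subspace. -/
def IsLine (F : Type*) [Field F] (L : Set (PG3 F)) : Prop :=
  ∃ W : Submodule F (Fin 4 → F), Module.finrank F W = 2 ∧ L = {p : PG3 F | p.rep ∈ W}

section PGAuxSection
open Module Submodule

namespace PGAux

variable {F : Type*} [Field F]

instance (V : Type*) [AddCommGroup V] [Module F V] [Finite V] :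
    Finite (Projectivization F V) := Quotient.finite _

instance (V W : Type*) [AddCommGroup V] [Module F V] [AddCommGroup W] [Module F W]
    [Finite V] [Finite W] : Finite (V →ₗ[F] W) :=
  Finite.of_injective _ DFunLike.coe_injective

variable {V : Type*} [AddCommGroup V] [Module F V]

/-- The set of points of a submodule. -/
def lineOf (W : Submodule F V) : Set (Projectivization F V) := {p | p.rep ∈ W}

lemma mk_rep_mem_iff (W : Submodule F V) (v : V) (hv : v ≠ 0) :
    (Projectivization.mk F v hv).rep ∈ W ↔ v ∈ W := by
  obtain ⟨a, ha⟩ := Projectivization.exists_smul_eq_mk_rep F v hv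
  rw [← ha]
  exact W.smul_mem_iff' a

lemma lineOf_mono {W₁ W₂ : Submodule F V} (h : lineOf W₁ ⊆ lineOf W₂) : W₁ ≤ W₂ := by
  intro v hv
  by_cases h0 : v = 0
  · simp [h0]
  · have h1 : Projectivization.mk F v h0 ∈ lineOf W₁ := (mk_rep_mem_iff W₁ v h0).mpr hv
    exact (mk_rep_mem_iff W₂ v h0).mp (h h1)

lemma lineOf_inj {W₁ W₂ : Submodule F V} (h : lineOf W₁ = lineOf W₂) : W₁ = W₂ :=
  le_antisymm (lineOf_mono h.le) (lineOf_mono h.ge)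

lemma lineOf_disjoint_iff {W₁ W₂ : Submodule F V} :
    lineOf W₁ ∩ lineOf W₂ = ∅ ↔ W₁ ⊓ W₂ = ⊥ := by
  constructor
  · intro h
    rw [Submodule.eq_bot_iff]
    intro v hv
    by_contra h0
    have hmem : Projectivization.mk F v h0 ∈ lineOf W₁ ∩ lineOf W₂ :=
      ⟨(mk_rep_mem_iff _ v h0).mpr hv.1, (mk_rep_mem_iff _ v h0).mpr hv.2⟩
    simp [h] at hmem
  · intro h
    ext p
    simp only [Set.mem_inter_iff, Set.mem_empty_iff_false, iff_false, not_and]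
    intro h1 h2
    have hmem : p.rep ∈ W₁ ⊓ W₂ := ⟨h1, h2⟩
    rw [h] at hmem
    exact p.rep_nonzero (by simpa using hmem)

/-- Counting pairs (v, w) with v ≠ 0 and w not in the span of v, in a finite vector space. -/
lemma count_pairs (U : Type*) [AddCommGroup U] [Module F U] [Fintype U] [Fintype F] :
    Nat.card {vw : U × U // vw.1 ≠ 0 ∧ vw.2 ∉ Submodule.span F {vw.1}} =
      (Fintype.card U - 1) * (Fintype.card U - Fintype.card F) := by
  classical
  have e : {vw : U × U // vw.1 ≠ 0 ∧ vw.2 ∉ Submodule.span F {vw.1}} ≃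
      Σ v : {v : U // v ≠ 0}, {w : U // w ∉ Submodule.span F {v.1}} :=
    { toFun := fun p => ⟨⟨p.1.1, p.2.1⟩, ⟨p.1.2, p.2.2⟩⟩
      invFun := fun s => ⟨(s.1.1, s.2.1), s.1.2, s.2.2⟩
      left_inv := fun p => rfl
      right_inv := fun s => rfl }
  rw [Nat.card_congr e, Nat.card_eq_fintype_card, Fintype.card_sigma]
  have h1 : ∀ v : {v : U // v ≠ 0},
      Fintype.card {w : U // w ∉ Submodule.span F {v.1}} =
        Fintype.card U - Fintype.card F := by
    intro v
    have hcard : Fintype.card ↥(Submodule.span F {(v : U)}) = Fintype.card F := by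
      rw [card_eq_pow_finrank (K := F), finrank_span_singleton v.2, pow_one]
    rw [Fintype.card_subtype_compl (fun w => w ∈ Submodule.span F {(v : U)})]
    congr 1
  have h2 : Fintype.card {v : U // v ≠ 0} = Fintype.card U - 1 := by
    have h3 : Fintype.card {v : U // ¬ (v = 0)} = Fintype.card U - 1 := by
      rw [Fintype.card_subtype_compl (fun v : U => v = 0), Fintype.card_subtype_eq]
    simpa using h3
  simp only [h1, Finset.sum_const, Finset.card_univ, smul_eq_mul, h2]

end PGAux

namespace PGAux

variable {F : Type*} [Field F] {V : Type*} [AddCommGroup V] [Module F V]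

lemma finrank_span_pair {v w : V} (hv : v ≠ 0) (hw : w ∉ Submodule.span F {v}) :
    Module.finrank F (Submodule.span F ({v, w} : Set V)) = 2 := by
  classical
  have hne : v ≠ w := fun h => hw (h ▸ Submodule.mem_span_singleton_self v)
  have hind : LinearIndependent F ((↑) : ({v, w} : Set V) → V) :=
    linearIndepOn_id_pair hv (fun a ha => hw (Submodule.mem_span_singleton.mpr ⟨a, ha⟩))
  rw [finrank_span_set_eq_card hind]
  simp [Set.toFinset_insert, Finset.card_insert_of_notMem, hne]

lemma mem_span_sub_iff {W : Submodule F V} (v w : W) :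
    (w : V) ∈ Submodule.span F {(v : V)} ↔ w ∈ Submodule.span F {v} := by
  constructor
  · intro h
    obtain ⟨a, ha⟩ := Submodule.mem_span_singleton.mp h
    exact Submodule.mem_span_singleton.mpr ⟨a, Subtype.ext (by simpa using ha)⟩
  · intro h
    obtain ⟨a, ha⟩ := Submodule.mem_span_singleton.mp h
    exact Submodule.mem_span_singleton.mpr ⟨a, by rw [← ha]; rfl⟩

variable [FiniteDimensional F V]

lemma isCompl_iff_aux (hV : Module.finrank F V = 4) {W W' : Submodule F V}
    (hW : Module.finrank F W = 2) :
    (Module.finrank F W' = 2 ∧ W ⊓ W' = ⊥) ↔ IsCompl W W' := by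
  constructor
  · rintro ⟨h2, hbot⟩
    rw [isCompl_iff, disjoint_iff, codisjoint_iff]
    refine ⟨hbot, ?_⟩
    have hs := Submodule.finrank_sup_add_finrank_inf_eq W W'
    rw [hbot, finrank_bot, hW, h2] at hs
    apply Submodule.eq_top_of_finrank_eq
    omega
  · intro h
    have hbot : W ⊓ W' = ⊥ := disjoint_iff.mp h.disjoint
    have hs := Submodule.finrank_sup_add_finrank_inf_eq W W'
    rw [hbot, finrank_bot, hW, codisjoint_iff.mp h.codisjoint, finrank_top, hV] at hs
    exact ⟨by omega, hbot⟩

lemma card_compl [Fintype F] (W : Submodule F V) :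
    Nat.card {W' : Submodule F V // IsCompl W W'} =
      Fintype.card F ^ ((Module.finrank F V - Module.finrank F W) * Module.finrank F W) := by
  classical
  obtain ⟨W₀, hW₀⟩ := Submodule.exists_isCompl W
  have hrk : Module.finrank F W₀ = Module.finrank F V - Module.finrank F W := by
    have := Submodule.finrank_add_eq_of_isCompl hW₀
    omega
  have e2 : {f : V →ₗ[F] W // ∀ x : W, f x = x} ≃ (W₀ →ₗ[F] W) :=
    { toFun := fun f => f.1 ∘ₗ W₀.subtype
      invFun := fun g => ⟨(LinearMap.id.coprod g) ∘ₗ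
          (Submodule.prodEquivOfIsCompl W W₀ hW₀).symm.toLinearMap, fun x => by
        simp [Submodule.prodEquivOfIsCompl_symm_apply_left W W₀ hW₀ x]⟩
      left_inv := fun f => by
        ext v
        obtain ⟨f, hf⟩ := f
        simp only [LinearMap.coe_comp, Function.comp_apply, LinearEquiv.coe_toLinearMap,
          LinearMap.coprod_apply, LinearMap.id_apply]
        conv_rhs => rw [← (Submodule.prodEquivOfIsCompl W W₀ hW₀).apply_symm_apply v]
        rw [Submodule.coe_prodEquivOfIsCompl']
        rw [map_add, hf]
        rfl
      right_inv := fun g => by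
        ext y
        simp [Submodule.prodEquivOfIsCompl_symm_apply_right W W₀ hW₀ y] }
  rw [Nat.card_congr ((W.isComplEquivProj).trans e2)]
  have hfin : Finite V := Module.finite_of_finite F
  have : Fintype (W₀ →ₗ[F] W) := Fintype.ofFinite _
  rw [Nat.card_eq_fintype_card, card_eq_pow_finrank (K := F), Module.finrank_linearMap, hrk]

end PGAux

namespace PGAux

instance {F V : Type*} [Field F] [AddCommGroup V] [Module F V] [Finite V] :
    Finite (Submodule F V) :=
  Finite.of_injective (fun W => (W : Set V)) SetLike.coe_injective

lemma nat_card_fiber {α β : Type*} [Finite α] [Fintype β] (f : α → β) :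
    Nat.card α = ∑ b, Nat.card {a // f a = b} := by
  classical
  have := Fintype.ofFinite α
  rw [Nat.card_congr (Equiv.sigmaFiberEquiv f).symm, Nat.card_eq_fintype_card,
    Fintype.card_sigma]
  simp [Nat.card_eq_fintype_card]

variable {F : Type*} [Field F] [Fintype F] {V : Type*} [AddCommGroup V] [Module F V]
  [FiniteDimensional F V]

local notation "q" => Fintype.card F

lemma card_G2 (hV : Module.finrank F V = 4) :
    Nat.card {W : Submodule F V // Module.finrank F W = 2} = (1 + q ^ 2) * (1 + q + q ^ 2) := by
  classical
  have hfinV : Finite V := Module.finite_of_finite F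
  have : Fintype V := Fintype.ofFinite V
  set G2 := {W : Submodule F V // Module.finrank F W = 2} with hG2
  have : Fintype G2 := Fintype.ofFinite _
  set IP := {vw : V × V // vw.1 ≠ 0 ∧ vw.2 ∉ Submodule.span F {vw.1}} with hIP
  let ψ : IP → G2 := fun p => ⟨Submodule.span F {p.1.1, p.1.2}, finrank_span_pair p.2.1 p.2.2⟩
  have fiberEquiv : ∀ W : G2, {p : IP // ψ p = W} ≃
      {vw : ↥W.1 × ↥W.1 // vw.1 ≠ 0 ∧ vw.2 ∉ Submodule.span F {vw.1}} := by
    intro W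
    have key : ∀ p : {p : IP // ψ p = W}, Submodule.span F {p.1.1.1, p.1.1.2} = W.1 :=
      fun p => congrArg Subtype.val p.2
    exact
    { toFun := fun p =>
        ⟨(⟨p.1.1.1, (key p) ▸ Submodule.subset_span (Set.mem_insert _ _)⟩,
          ⟨p.1.1.2, (key p) ▸ Submodule.subset_span (Set.mem_insert_iff.mpr (Or.inr rfl))⟩),
          fun h => p.1.2.1 (congrArg Subtype.val h),
          by rw [← mem_span_sub_iff]; exact p.1.2.2⟩
      invFun := fun s =>
        ⟨⟨((s.1.1 : V), (s.1.2 : V)),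
          fun h => s.2.1 (ZeroMemClass.coe_eq_zero.mp h),
          by rw [mem_span_sub_iff]; exact s.2.2⟩,
          Subtype.ext (Submodule.eq_of_le_of_finrank_le
            (by
              rw [Submodule.span_le, Set.insert_subset_iff]
              exact ⟨s.1.1.2, Set.singleton_subset_iff.mpr s.1.2.2⟩)
            (by
              rw [W.2, finrank_span_pair (fun h => s.2.1 (ZeroMemClass.coe_eq_zero.mp h))
                (by rw [mem_span_sub_iff]; exact s.2.2)]))⟩
      left_inv := fun p => Subtype.ext (Subtype.ext rfl)
      right_inv := fun s => Subtype.ext (Prod.ext (Subtype.ext rfl) (Subtype.ext rfl)) }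
  have hcardW : ∀ W : G2, Fintype.card ↥W.1 = q ^ 2 := fun W => by
    rw [card_eq_pow_finrank (K := F), W.2]
  have hstep : Nat.card IP = Nat.card G2 * ((q ^ 2 - 1) * (q ^ 2 - q)) := by
    rw [nat_card_fiber ψ]
    have : ∀ W : G2, Nat.card {p : IP // ψ p = W} = (q ^ 2 - 1) * (q ^ 2 - q) := by
      intro W
      rw [Nat.card_congr (fiberEquiv W), count_pairs, hcardW W]
    simp only [this, Finset.sum_const, Finset.card_univ, smul_eq_mul, Nat.card_eq_fintype_card]
  have hIPcard : Nat.card IP = (q ^ 4 - 1) * (q ^ 4 - q) := by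
    rw [hIP, count_pairs, card_eq_pow_finrank (K := F) (V := V), hV]
  have hq2 : 2 ≤ q := Fintype.one_lt_card
  have hfact : (q ^ 4 - 1) * (q ^ 4 - q) =
      ((1 + q ^ 2) * (1 + q + q ^ 2)) * ((q ^ 2 - 1) * (q ^ 2 - q)) := by
    have h1 : 1 ≤ q ^ 2 := Nat.one_le_pow _ _ (by omega)
    have h2 : q ≤ q ^ 2 := by nlinarith
    have h3 : 1 ≤ q ^ 4 := Nat.one_le_pow _ _ (by omega)
    have h4 : q ≤ q ^ 4 := by nlinarith
    zify [h1, h2, h3, h4]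
    ring
  have hpos : 0 < (q ^ 2 - 1) * (q ^ 2 - q) := by
    have h2 : q < q ^ 2 := by nlinarith
    have : 0 < q ^ 2 - 1 := by omega
    have : 0 < q ^ 2 - q := by omega
    positivity
  apply Nat.eq_of_mul_eq_mul_right hpos
  rw [← hstep, hIPcard, hfact]

end PGAux

namespace PGAux

variable {F : Type*} [Field F] [Fintype F] {V : Type*} [AddCommGroup V] [Module F V]
  [FiniteDimensional F V]

local notation "q" => Fintype.card F

lemma card_P (hV : Module.finrank F V = 4) :
    Nat.card {p : Submodule F V × Submodule F V //
        Module.finrank F p.1 = 2 ∧ Module.finrank F p.2 = 2 ∧ p.1 ⊓ p.2 = ⊥} =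
      (1 + q ^ 2) * (1 + q + q ^ 2) * q ^ 4 := by
  classical
  have hfinV : Finite V := Module.finite_of_finite F
  set G2 := {W : Submodule F V // Module.finrank F W = 2} with hG2
  have : Fintype G2 := Fintype.ofFinite _
  set P := {p : Submodule F V × Submodule F V //
      Module.finrank F p.1 = 2 ∧ Module.finrank F p.2 = 2 ∧ p.1 ⊓ p.2 = ⊥} with hP
  let f : P → G2 := fun p => ⟨p.1.1, p.2.1⟩
  have fiberEquiv : ∀ W : G2, {p : P // f p = W} ≃
      {W' : Submodule F V // Module.finrank F W' = 2 ∧ W.1 ⊓ W' = ⊥} := by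
    intro W
    have key : ∀ p : {p : P // f p = W}, p.1.1.1 = W.1 := fun p => congrArg Subtype.val p.2
    exact
    { toFun := fun p => ⟨p.1.1.2, p.1.2.2.1, (key p) ▸ p.1.2.2.2⟩
      invFun := fun s => ⟨⟨(W.1, s.1), W.2, s.2.1, s.2.2⟩, Subtype.ext rfl⟩
      left_inv := fun p => Subtype.ext (Subtype.ext (Prod.ext (key p).symm rfl))
      right_inv := fun s => Subtype.ext rfl }
  rw [nat_card_fiber f]
  have hfib : ∀ W : G2, Nat.card {p : P // f p = W} = q ^ 4 := by
    intro W
    rw [Nat.card_congr ((fiberEquiv W).trans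
      (Equiv.subtypeEquivRight (fun W' => isCompl_iff_aux hV W.2)))]
    rw [card_compl W.1, hV, W.2]
  simp only [hfib, Finset.sum_const, Finset.card_univ, smul_eq_mul]
  rw [← Nat.card_eq_fintype_card, card_G2 hV]

end PGAux

end PGAuxSection

theorem stmt12 (F : Type*) [Field F] [Fintype F] (q : ℕ) (hq : Fintype.card F = q) :
    2 * Nat.card {s : Set (Set (PG3 F)) // ∃ L₁ L₂ : Set (PG3 F),
        IsLine F L₁ ∧ IsLine F L₂ ∧ L₁ ∩ L₂ = ∅ ∧ s = {L₁, L₂}} =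
      (1 + q ^ 2) * (1 + q + q ^ 2) * q ^ 4 ∧
    (q = 3 → Nat.card {s : Set (Set (PG3 F)) // ∃ L₁ L₂ : Set (PG3 F),
        IsLine F L₁ ∧ IsLine F L₂ ∧ L₁ ∩ L₂ = ∅ ∧ s = {L₁, L₂}} = 5265) := by
  classical
  subst hq
  set q := Fintype.card F with hq
  set V := (Fin 4 → F) with hVdef
  have hV : Module.finrank F V = 4 := Module.finrank_fin_fun F
  set T := {s : Set (Set (PG3 F)) // ∃ L₁ L₂ : Set (PG3 F),
      IsLine F L₁ ∧ IsLine F L₂ ∧ L₁ ∩ L₂ = ∅ ∧ s = {L₁, L₂}} with hT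
  set P := {p : Submodule F V × Submodule F V //
      Module.finrank F p.1 = 2 ∧ Module.finrank F p.2 = 2 ∧ p.1 ⊓ p.2 = ⊥} with hP
  have : Fintype T := Fintype.ofFinite _
  let Φ : P → T := fun p => ⟨{PGAux.lineOf p.1.1, PGAux.lineOf p.1.2},
    PGAux.lineOf p.1.1, PGAux.lineOf p.1.2, ⟨p.1.1, p.2.1, rfl⟩, ⟨p.1.2, p.2.2.1, rfl⟩,
    PGAux.lineOf_disjoint_iff.mpr p.2.2.2, rfl⟩
  have key : Nat.card P = 2 * Nat.card T := by
    rw [PGAux.nat_card_fiber Φ]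
    have hfib : ∀ t : T, Nat.card {p : P // Φ p = t} = 2 := by
      intro t
      obtain ⟨s, L₁, L₂, h₁, h₂, hdisj, hs⟩ := t
      obtain ⟨W₁, hW₁, hL₁⟩ := h₁
      obtain ⟨W₂, hW₂, hL₂⟩ := h₂
      have hL₁' : L₁ = PGAux.lineOf W₁ := hL₁
      have hL₂' : L₂ = PGAux.lineOf W₂ := hL₂
      rw [hL₁', hL₂'] at hdisj
      have hbot : W₁ ⊓ W₂ = ⊥ := PGAux.lineOf_disjoint_iff.mp hdisj
      have hWne : W₁ ≠ W₂ := by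
        intro h
        rw [h, inf_idem] at hbot
        rw [hbot, finrank_bot] at hW₂
        omega
      let x : P := ⟨(W₁, W₂), hW₁, hW₂, hbot⟩
      let y : P := ⟨(W₂, W₁), hW₂, hW₁, by rw [inf_comm]; exact hbot⟩
      have hxy : x ≠ y := fun h => hWne (congrArg (fun p => p.1.1) h)
      have hiff : ∀ p : P, Φ p = ⟨s, L₁, L₂, ⟨W₁, hW₁, hL₁⟩, ⟨W₂, hW₂, hL₂⟩,
          (by rw [hL₁', hL₂']; exact hdisj), hs⟩ ↔ p = x ∨ p = y := by
        intro p
        constructor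
        · intro h
          have h2 : ({PGAux.lineOf p.1.1, PGAux.lineOf p.1.2} : Set (Set (PG3 F))) = s :=
            congrArg Subtype.val h
          rcases Set.pair_eq_pair_iff.mp (h2.trans hs) with ⟨e1, e2⟩ | ⟨e1, e2⟩
          · left
            exact Subtype.ext (Prod.ext (PGAux.lineOf_inj (by rw [e1, hL₁']))
              (PGAux.lineOf_inj (by rw [e2, hL₂'])))
          · right
            exact Subtype.ext (Prod.ext (PGAux.lineOf_inj (by rw [e1, hL₂']))
              (PGAux.lineOf_inj (by rw [e2, hL₁'])))
        · rintro (rfl | rfl) <;> apply Subtype.ext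
          · show ({PGAux.lineOf W₁, PGAux.lineOf W₂} : Set (Set (PG3 F))) = s
            rw [hs, hL₁', hL₂']
          · show ({PGAux.lineOf W₂, PGAux.lineOf W₁} : Set (Set (PG3 F))) = s
            rw [hs, hL₁', hL₂', Set.pair_comm]
      rw [Nat.card_congr (Equiv.subtypeEquivRight hiff)]
      have hpair : Nat.card {p : P // p = x ∨ p = y} = Nat.card ({x, y} : Set P) :=
        Nat.card_congr (Equiv.subtypeEquivRight (fun p => by simp))
      rw [hpair, Nat.card_coe_set_eq, Set.ncard_pair hxy]
    simp only [hfib, Finset.sum_const, Finset.card_univ, smul_eq_mul,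
      Nat.card_eq_fintype_card]
    ring
  have main : 2 * Nat.card T = (1 + q ^ 2) * (1 + q + q ^ 2) * q ^ 4 := by
    rw [← key, PGAux.card_P hV]
  refine ⟨main, fun h3 => ?_⟩
  rw [h3] at main
  omega
end
end

section
/- Let T ⊂ PG(3,3) be the 8-point configuration {e₀, e₀+e₃, e₁, e₁+e₃, e₂, e₂+e₃, e₀+e₁+e₂, e₀−e₁−e₂+e₃}. Then the space I₂(T) of quadratic forms vanishing on T is 2-dimensional with basis {X₁(X₂−X₀) + X₃(X₀+X₁+X₂−X₃), X₀(X₂−X₁)}, and V(I₂(T)) = T; hence T is a maximal configuration of rank 8 in PG(3,3). -/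
open MvPolynomial

noncomputable section

/-- the point of `PG(3,3)` with the given (nonzero) coordinate vector. -/
def pt (v : Fin 4 → ZMod 3) (h : v ≠ 0) : PG3 (ZMod 3) := Projectivization.mk (ZMod 3) v h

/- ### auxiliary machinery -/

def F4 (a b c d : ℕ) : Fin 4 →₀ ℕ := Finsupp.equivFunOnFinite.symm ![a,b,c,d]

lemma F4_apply (a b c d : ℕ) (k : Fin 4) : F4 a b c d k = ![a,b,c,d] k := rfl

lemma eq_F4_iff (m : Fin 4 →₀ ℕ) (a b c d : ℕ) :
    m = F4 a b c d ↔ (m 0 = a ∧ m 1 = b ∧ m 2 = c ∧ m 3 = d) := by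
  constructor
  · rintro rfl; exact ⟨rfl, rfl, rfl, rfl⟩
  · rintro ⟨h0, h1, h2, h3⟩
    ext k
    fin_cases k <;> simpa [F4_apply]

lemma monomial_F4 {R : Type*} [CommSemiring R] (a b c d : ℕ) (r : R) :
    monomial (F4 a b c d) r = C r * X 0 ^ a * X 1 ^ b * X 2 ^ c * X 3 ^ d := by
  rw [monomial_eq, Finsupp.prod_fintype _ _ (fun _ => pow_zero _), Fin.prod_univ_four]
  simp [F4_apply, mul_assoc]

lemma abs10 (a b c d : ℕ) (h : a + b + c + d = 2) :
    (a=2∧b=0∧c=0∧d=0) ∨ (a=0∧b=2∧c=0∧d=0) ∨ (a=0∧b=0∧c=2∧d=0) ∨ (a=0∧b=0∧c=0∧d=2) ∨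
    (a=1∧b=1∧c=0∧d=0) ∨ (a=1∧b=0∧c=1∧d=0) ∨ (a=1∧b=0∧c=0∧d=1) ∨
    (a=0∧b=1∧c=1∧d=0) ∨ (a=0∧b=1∧c=0∧d=1) ∨ (a=0∧b=0∧c=1∧d=1) := by
  have ha : a ≤ 2 := by omega
  have hb : b ≤ 2 := by omega
  have hc : c ≤ 2 := by omega
  have hd : d ≤ 2 := by omega
  interval_cases a <;> interval_cases b <;> interval_cases c <;> interval_cases d <;> simp_all

lemma mem10 (m : Fin 4 →₀ ℕ) (h : m 0 + m 1 + m 2 + m 3 = 2) :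
    m = F4 2 0 0 0 ∨ m = F4 0 2 0 0 ∨ m = F4 0 0 2 0 ∨ m = F4 0 0 0 2 ∨
    m = F4 1 1 0 0 ∨ m = F4 1 0 1 0 ∨ m = F4 1 0 0 1 ∨
    m = F4 0 1 1 0 ∨ m = F4 0 1 0 1 ∨ m = F4 0 0 1 1 := by
  simp only [eq_F4_iff]
  exact abs10 _ _ _ _ h

lemma expand (f : MvPolynomial (Fin 4) (ZMod 3)) (hf : f.IsHomogeneous 2) :
    f = monomial (F4 2 0 0 0) (coeff (F4 2 0 0 0) f) + monomial (F4 0 2 0 0) (coeff (F4 0 2 0 0) f)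
      + monomial (F4 0 0 2 0) (coeff (F4 0 0 2 0) f) + monomial (F4 0 0 0 2) (coeff (F4 0 0 0 2) f)
      + monomial (F4 1 1 0 0) (coeff (F4 1 1 0 0) f) + monomial (F4 1 0 1 0) (coeff (F4 1 0 1 0) f)
      + monomial (F4 1 0 0 1) (coeff (F4 1 0 0 1) f) + monomial (F4 0 1 1 0) (coeff (F4 0 1 1 0) f)
      + monomial (F4 0 1 0 1) (coeff (F4 0 1 0 1) f) + monomial (F4 0 0 1 1) (coeff (F4 0 0 1 1) f) := by
  ext m
  simp only [coeff_add, coeff_monomial]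
  by_cases hs : m 0 + m 1 + m 2 + m 3 = 2
  · rcases mem10 m hs with h|h|h|h|h|h|h|h|h|h <;> subst h <;>
      simp [eq_F4_iff, F4_apply]
  · have h0 : coeff m f = 0 := by
      by_contra hne
      have := hf hne
      simp [Finsupp.weight_apply, Finsupp.sum_fintype, Fin.sum_univ_four] at this
      omega
    rw [h0]
    have hne : ∀ a b c d : ℕ, a + b + c + d = 2 → ¬ (F4 a b c d = m) := by
      intro a b c d habcd heq
      apply hs
      rw [← heq]
      simpa [F4_apply] using habcd
    rw [if_neg (hne 2 0 0 0 (by norm_num)), if_neg (hne 0 2 0 0 (by norm_num)),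
        if_neg (hne 0 0 2 0 (by norm_num)), if_neg (hne 0 0 0 2 (by norm_num)),
        if_neg (hne 1 1 0 0 (by norm_num)), if_neg (hne 1 0 1 0 (by norm_num)),
        if_neg (hne 1 0 0 1 (by norm_num)), if_neg (hne 0 1 1 0 (by norm_num)),
        if_neg (hne 0 1 0 1 (by norm_num)), if_neg (hne 0 0 1 1 (by norm_num))]
    simp

lemma eval_smul_hom (f : MvPolynomial (Fin 4) (ZMod 3)) (hf : f.IsHomogeneous 2)
    (c : ZMod 3) (v : Fin 4 → ZMod 3) :
    eval (c • v) f = c ^ 2 * eval v f := by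
  rw [eval_eq, eval_eq, Finset.mul_sum]
  apply Finset.sum_congr rfl
  intro d hd
  have hsum : ∑ i ∈ d.support, d i = 2 := by
    have := hf (mem_support_iff.mp hd)
    simpa [Finsupp.weight_apply, Finsupp.sum] using this
  simp only [Pi.smul_apply, smul_eq_mul, mul_pow]
  rw [Finset.prod_mul_distrib, Finset.prod_pow_eq_pow_sum, hsum]
  ring

lemma eval_rep_iff (f : MvPolynomial (Fin 4) (ZMod 3)) (hf : f.IsHomogeneous 2)
    (v : Fin 4 → ZMod 3) (hv : v ≠ 0) :
    eval (pt v hv).rep f = 0 ↔ eval v f = 0 := by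
  obtain ⟨c, hc⟩ := Projectivization.exists_smul_eq_mk_rep (ZMod 3) v hv
  rw [pt, ← hc, Units.smul_def, eval_smul_hom f hf]
  constructor
  · intro h
    rcases mul_eq_zero.mp h with h | h
    · exact absurd (pow_eq_zero_iff (by norm_num)|>.mp h) (Units.ne_zero c)
    · exact h
  · intro h; rw [h, mul_zero]

lemma eval_expand (f : MvPolynomial (Fin 4) (ZMod 3)) (hf : f.IsHomogeneous 2)
    (v : Fin 4 → ZMod 3) :
    eval v f = coeff (F4 2 0 0 0) f * v 0 ^ 2 + coeff (F4 0 2 0 0) f * v 1 ^ 2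
      + coeff (F4 0 0 2 0) f * v 2 ^ 2 + coeff (F4 0 0 0 2) f * v 3 ^ 2
      + coeff (F4 1 1 0 0) f * (v 0 * v 1) + coeff (F4 1 0 1 0) f * (v 0 * v 2)
      + coeff (F4 1 0 0 1) f * (v 0 * v 3) + coeff (F4 0 1 1 0) f * (v 1 * v 2)
      + coeff (F4 0 1 0 1) f * (v 1 * v 3) + coeff (F4 0 0 1 1) f * (v 2 * v 3) := by
  conv_lhs => rw [expand f hf]
  simp only [monomial_F4, eval_add, eval_mul, eval_pow, eval_C, eval_X]
  ring

set_option maxHeartbeats 1000000 in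
lemma finite_check : ∀ v : Fin 4 → ZMod 3, v ≠ 0 →
    v 1 * (v 2 - v 0) + v 3 * (v 0 + v 1 + v 2 - v 3) = 0 →
    v 0 * (v 2 - v 1) = 0 →
    (∃ c : ZMod 3, c ≠ 0 ∧ c • ![1,0,0,0] = v) ∨ (∃ c : ZMod 3, c ≠ 0 ∧ c • ![1,0,0,1] = v) ∨
    (∃ c : ZMod 3, c ≠ 0 ∧ c • ![0,1,0,0] = v) ∨ (∃ c : ZMod 3, c ≠ 0 ∧ c • ![0,1,0,1] = v) ∨
    (∃ c : ZMod 3, c ≠ 0 ∧ c • ![0,0,1,0] = v) ∨ (∃ c : ZMod 3, c ≠ 0 ∧ c • ![0,0,1,1] = v) ∨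
    (∃ c : ZMod 3, c ≠ 0 ∧ c • ![1,1,1,0] = v) ∨ (∃ c : ZMod 3, c ≠ 0 ∧ c • ![1,-1,-1,1] = v) := by
  decide

theorem stmt19 (T : Set (PG3 (ZMod 3)))
    (hT : T = {pt ![1, 0, 0, 0] (by decide), pt ![1, 0, 0, 1] (by decide),
               pt ![0, 1, 0, 0] (by decide), pt ![0, 1, 0, 1] (by decide),
               pt ![0, 0, 1, 0] (by decide), pt ![0, 0, 1, 1] (by decide),
               pt ![1, 1, 1, 0] (by decide), pt ![1, -1, -1, 1] (by decide)}) :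
    I2 (ZMod 3) T = Submodule.span (ZMod 3)
      {X 1 * (X 2 - X 0) + X 3 * (X 0 + X 1 + X 2 - X 3), X 0 * (X 2 - X 1)} ∧
    Module.finrank (ZMod 3) (I2 (ZMod 3) T) = 2 ∧
    Vz (ZMod 3) (I2 (ZMod 3) T) = T ∧
    rk (ZMod 3) T = 8 := by
  subst hT
  set g1 : MvPolynomial (Fin 4) (ZMod 3) :=
    X 1 * (X 2 - X 0) + X 3 * (X 0 + X 1 + X 2 - X 3) with hg1def
  set g2 : MvPolynomial (Fin 4) (ZMod 3) := X 0 * (X 2 - X 1) with hg2def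
  have hg1hom : g1.IsHomogeneous 2 :=
    ((isHomogeneous_X _ 1).mul ((isHomogeneous_X _ 2).sub (isHomogeneous_X _ 0))).add
      ((isHomogeneous_X _ 3).mul
        ((((isHomogeneous_X _ 0).add (isHomogeneous_X _ 1)).add (isHomogeneous_X _ 2)).sub
          (isHomogeneous_X _ 3)))
  have hg2hom : g2.IsHomogeneous 2 :=
    (isHomogeneous_X _ 0).mul ((isHomogeneous_X _ 2).sub (isHomogeneous_X _ 1))
  have heval1 : ∀ v : Fin 4 → ZMod 3,
      eval v g1 = v 1 * (v 2 - v 0) + v 3 * (v 0 + v 1 + v 2 - v 3) := by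
    intro v; simp [hg1def]
  have heval2 : ∀ v : Fin 4 → ZMod 3, eval v g2 = v 0 * (v 2 - v 1) := by
    intro v; simp [hg2def]
  set S : Set (PG3 (ZMod 3)) :=
      {pt ![1, 0, 0, 0] (by decide), pt ![1, 0, 0, 1] (by decide),
       pt ![0, 1, 0, 0] (by decide), pt ![0, 1, 0, 1] (by decide),
       pt ![0, 0, 1, 0] (by decide), pt ![0, 0, 1, 1] (by decide),
       pt ![1, 1, 1, 0] (by decide), pt ![1, -1, -1, 1] (by decide)} with hS
  -- membership of I2 characterization
  have hI2mem : ∀ f : MvPolynomial (Fin 4) (ZMod 3),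
      f ∈ I2 (ZMod 3) S ↔ (f.IsHomogeneous 2 ∧ ∀ p ∈ S, eval p.rep f = 0) := by
    intro f
    rw [I2, Submodule.mem_inf, mem_homogeneousSubmodule]
    simp only [Submodule.mem_iInf, LinearMap.mem_ker, AlgHom.toLinearMap_apply]
    constructor
    · rintro ⟨h1, h2⟩
      refine ⟨h1, fun p hp => ?_⟩
      have := h2 p hp
      rwa [← coe_aeval_eq_eval, RingHom.coe_coe]
    · rintro ⟨h1, h2⟩
      refine ⟨h1, fun p hp => ?_⟩
      have := h2 p hp
      rwa [← coe_aeval_eq_eval, RingHom.coe_coe] at this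
  -- the span is contained in I2
  have hle1 : Submodule.span (ZMod 3) {g1, g2} ≤ I2 (ZMod 3) S := by
    rw [Submodule.span_le]
    intro x hx
    have hxmem : x = g1 ∨ x = g2 := hx
    rcases hxmem with rfl | rfl <;>
    · rw [SetLike.mem_coe, hI2mem]
      constructor
      · first | exact hg1hom | exact hg2hom
      intro p hp
      rcases hp with rfl | rfl | rfl | rfl | rfl | rfl | rfl | rfl <;>
        rw [eval_rep_iff _ (by first | exact hg1hom | exact hg2hom) _ _] <;>
        first
          | (rw [heval1]; decide)
          | (rw [heval2]; decide)
  -- I2 is contained in the span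
  have hle2 : I2 (ZMod 3) S ≤ Submodule.span (ZMod 3) {g1, g2} := by
    intro f hf
    rw [hI2mem] at hf
    obtain ⟨hhom, hvan⟩ := hf
    have hv : ∀ (v : Fin 4 → ZMod 3) (hv : v ≠ 0), pt v hv ∈ S → eval v f = 0 := by
      intro v hv0 hmem
      exact (eval_rep_iff f hhom v hv0).mp (hvan _ hmem)
    have h1 := hv ![1,0,0,0] (by decide) (by rw [hS]; left; rfl)
    have h2 := hv ![1,0,0,1] (by decide) (by rw [hS]; right; left; rfl)
    have h3 := hv ![0,1,0,0] (by decide) (by rw [hS]; right; right; left; rfl)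
    have h4 := hv ![0,1,0,1] (by decide) (by rw [hS]; right; right; right; left; rfl)
    have h5 := hv ![0,0,1,0] (by decide) (by rw [hS]; right; right; right; right; left; rfl)
    have h6 := hv ![0,0,1,1] (by decide) (by rw [hS]; right; right; right; right; right; left; rfl)
    have h7 := hv ![1,1,1,0] (by decide)
      (by rw [hS]; right; right; right; right; right; right; left; rfl)
    have h8 := hv ![1,-1,-1,1] (by decide)
      (by rw [hS]; right; right; right; right; right; right; right; rfl)
    rw [eval_expand f hhom] at h1 h2 h3 h4 h5 h6 h7 h8
    norm_num [Matrix.cons_val_two, Matrix.cons_val_three, Matrix.head_cons, Matrix.tail_cons] at h1 h2 h3 h4 h5 h6 h7 h8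
    have hchar : (3 : ZMod 3) = 0 := by decide
    have va : coeff (F4 2 0 0 0) f = 0 := h1
    have vb : coeff (F4 0 2 0 0) f = 0 := h3
    have vc : coeff (F4 0 0 2 0) f = 0 := h5
    have vh : coeff (F4 1 0 0 1) f = -coeff (F4 0 0 0 2) f := by linear_combination h2 - h1
    have vj : coeff (F4 0 1 0 1) f = -coeff (F4 0 0 0 2) f := by linear_combination h4 - h3
    have vk : coeff (F4 0 0 1 1) f = -coeff (F4 0 0 0 2) f := by linear_combination h6 - h5
    have vi : coeff (F4 0 1 1 0) f = -coeff (F4 0 0 0 2) f := by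
      linear_combination 2*h7 + 2*h8 - va - vb - vc - 2*vh - vj - vk
        - (coeff (F4 0 0 0 2) f) * hchar
        + (-(coeff (F4 0 1 1 0) f) - coeff (F4 2 0 0 0) f - coeff (F4 0 2 0 0) f
           - coeff (F4 0 0 2 0) f + coeff (F4 0 1 0 1) f + coeff (F4 0 0 1 1) f
           + 2*coeff (F4 0 0 0 2) f) * hchar
    have vg : coeff (F4 1 0 1 0) f = coeff (F4 0 0 0 2) f - coeff (F4 1 1 0 0) f := by
      linear_combination h7 - va - vb - vc - vi
    have hrepr : f = (-(coeff (F4 0 0 0 2) f)) • g1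
        + (coeff (F4 0 0 0 2) f - coeff (F4 1 1 0 0) f) • g2 := by
      conv_lhs => rw [expand f hhom]
      rw [va, vb, vc, vh, vj, vk, vi, vg, hg1def, hg2def]
      simp only [monomial_F4, MvPolynomial.smul_eq_C_mul, map_neg, map_sub, map_zero]
      ring
    rw [hrepr]
    exact Submodule.add_mem _
      (Submodule.smul_mem _ _ (Submodule.subset_span (Set.mem_insert _ _)))
      (Submodule.smul_mem _ _ (Submodule.subset_span (Set.mem_insert_of_mem _ rfl)))
  have hspan := le_antisymm hle2 hle1
  have hrange : ({g1, g2} : Set (MvPolynomial (Fin 4) (ZMod 3))) = Set.range ![g1, g2] := by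
    ext x
    simp [Fin.exists_fin_two]
    tauto
  have hind : LinearIndependent (ZMod 3) ![g1, g2] := by
    rw [linearIndependent_fin2]
    constructor
    · intro h
      have h2 := heval2 ![1,0,1,0]
      rw [show (![g1, g2] 1) = g2 from rfl] at h
      rw [h] at h2
      simp at h2
    · intro a h
      have e1 := congrArg (eval ![0,0,0,1]) h
      rw [show (![g1, g2] 1) = g2 from rfl, show (![g1, g2] 0) = g1 from rfl] at e1
      rw [smul_eval, heval2, heval1] at e1
      clear h
      revert a
      decide
  have hfr : Module.finrank (ZMod 3) (I2 (ZMod 3) S) = 2 := by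
    rw [hspan, hrange, finrank_span_eq_card hind]
    simp
  refine ⟨hspan, hfr, ?_, ?_⟩
  · ext p
    simp only [Vz, Set.mem_setOf_eq]
    constructor
    · intro hp
      have e1 : eval p.rep g1 = 0 :=
        hp g1 (hle1 (Submodule.subset_span (Set.mem_insert _ _)))
      have e2 : eval p.rep g2 = 0 :=
        hp g2 (hle1 (Submodule.subset_span (Set.mem_insert_of_mem _ rfl)))
      rw [heval1] at e1
      rw [heval2] at e2
      have hv := Projectivization.rep_nonzero p
      have key : ∀ (w : Fin 4 → ZMod 3) (hw : w ≠ 0),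
          (∃ c : ZMod 3, c ≠ 0 ∧ c • w = p.rep) → p = pt w hw := by
        rintro w hw ⟨c, hc, hcw⟩
        rw [← Projectivization.mk_rep p, pt]
        exact (Projectivization.mk_eq_mk_iff' (ZMod 3) _ _ _ _).mpr ⟨c, hcw⟩
      rcases finite_check p.rep hv e1 e2 with h|h|h|h|h|h|h|h
      · rw [key _ (by decide) h]; exact Set.mem_insert _ _
      · rw [key _ (by decide) h]; right; left; rfl
      · rw [key _ (by decide) h]; right; right; left; rfl
      · rw [key _ (by decide) h]; right; right; right; left; rfl
      · rw [key _ (by decide) h]; right; right; right; right; left; rfl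
      · rw [key _ (by decide) h]; right; right; right; right; right; left; rfl
      · rw [key _ (by decide) h]; right; right; right; right; right; right; left; rfl
      · rw [key _ (by decide) h]; right; right; right; right; right; right; right; rfl
    · intro hp f hf
      exact ((hI2mem f).mp hf).2 p hp
  · rw [rk, hfr]
end
end
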